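/- arXiv:1711.08051 — 9 statements merged into one kernel-verified Lean document; each statement's English description precedes it below -/
import Mathlib

section
/- If f : [a,b] → ℝ (with 0 < a < b) is harmonically convex on [a,b], then its symmetrical transform f̆(t) := (1/2)[f(t) + f(abt/((a+b)t - ab))] is also harmonically convex on [a,b]. -/
/-- The symmetrical transform of `f` on `[a,b]`. -/
noncomputable def symTransform (a b : ℝ) (f : ℝ → ℝ) (t : ℝ) : ℝ :=
  (1/2) * (f t + f (a * b * t / ((a + b) * t - a * b)))

lemma symTransform_aux_mem (a b : ℝ) (ha : 0 < a) (hab : a < b) {x : ℝ}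
    (hx : x ∈ Set.Icc a b) : a * b * x / ((a + b) * x - a * b) ∈ Set.Icc a b := by
  obtain ⟨h1, h2⟩ := hx
  have hd : 0 < (a + b) * x - a * b := by nlinarith
  constructor
  · rw [le_div_iff₀ hd]
    nlinarith [mul_nonneg (mul_nonneg ha.le ha.le) (sub_nonneg.mpr h2)]
  · rw [div_le_iff₀ hd]
    nlinarith [mul_nonneg (mul_nonneg (by linarith : (0:ℝ) ≤ b) (by linarith : (0:ℝ) ≤ b))
      (sub_nonneg.mpr h1)]

/-- If `f` is harmonically convex on `[a,b]` (`0 < a < b`), then its symmetrical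
transform is also harmonically convex on `[a,b]`. -/
theorem symTransform_harmonic_convex (a b : ℝ) (f : ℝ → ℝ)
    (ha : 0 < a) (hab : a < b)
    (hf : ∀ x ∈ Set.Icc a b, ∀ y ∈ Set.Icc a b, ∀ l ∈ Set.Icc (0:ℝ) 1,
      f (x * y / (l * x + (1 - l) * y)) ≤ (1 - l) * f x + l * f y) :
    ∀ x ∈ Set.Icc a b, ∀ y ∈ Set.Icc a b, ∀ l ∈ Set.Icc (0:ℝ) 1,
      symTransform a b f (x * y / (l * x + (1 - l) * y)) ≤
        (1 - l) * symTransform a b f x + l * symTransform a b f y := by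
  intro x hx y hy l hl
  obtain ⟨hx1, hx2⟩ := hx
  obtain ⟨hy1, hy2⟩ := hy
  obtain ⟨hl0, hl1⟩ := hl
  have hD : 0 < l * x + (1 - l) * y := by nlinarith
  set H := x * y / (l * x + (1 - l) * y) with hHdef
  have hHa : a ≤ H := by
    rw [hHdef, le_div_iff₀ hD]
    nlinarith [mul_nonneg (mul_nonneg hl0 (by linarith : (0:ℝ) ≤ x))
      (by linarith : (0:ℝ) ≤ y - a),
      mul_nonneg (mul_nonneg (by linarith : (0:ℝ) ≤ 1 - l) (by linarith : (0:ℝ) ≤ y))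
      (by linarith : (0:ℝ) ≤ x - a)]
  have hHb : H ≤ b := by
    rw [hHdef, div_le_iff₀ hD]
    nlinarith [mul_nonneg (mul_nonneg hl0 (by linarith : (0:ℝ) ≤ x))
      (by linarith : (0:ℝ) ≤ b - y),
      mul_nonneg (mul_nonneg (by linarith : (0:ℝ) ≤ 1 - l) (by linarith : (0:ℝ) ≤ y))
      (by linarith : (0:ℝ) ≤ b - x)]
  set gx := a * b * x / ((a + b) * x - a * b) with hgx
  set gy := a * b * y / ((a + b) * y - a * b) with hgy
  have hgxm := symTransform_aux_mem a b ha hab ⟨hx1, hx2⟩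
  have hgym := symTransform_aux_mem a b ha hab ⟨hy1, hy2⟩
  rw [← hgx] at hgxm; rw [← hgy] at hgym
  have hdx : 0 < (a + b) * x - a * b := by nlinarith
  have hdy : 0 < (a + b) * y - a * b := by nlinarith
  have hdH : 0 < (a + b) * H - a * b := by
    nlinarith [mul_nonneg (by linarith : (0:ℝ) ≤ a + b) (by linarith : (0:ℝ) ≤ H - a)]
  have hDg : 0 < l * gx + (1 - l) * gy := by
    obtain ⟨h1, _⟩ := hgxm; obtain ⟨h2, _⟩ := hgym
    nlinarith [mul_nonneg hl0 (by linarith : (0:ℝ) ≤ gx - a),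
      mul_nonneg (by linarith : (0:ℝ) ≤ 1 - l) (by linarith : (0:ℝ) ≤ gy - a)]
  have key : a * b * H / ((a + b) * H - a * b) = gx * gy / (l * gx + (1 - l) * gy) := by
    rw [div_eq_div_iff hdH.ne' hDg.ne']
    simp only [hgx, hgy, hHdef]
    field_simp [(by rw [mul_comm]; exact hdx.ne' : x * (a + b) - a * b ≠ 0), (by rw [mul_comm]; exact hdy.ne' : y * (a + b) - a * b ≠ 0), (by linarith : x * l + y * (1 - l) ≠ 0)]
    ring
  have h1 := hf x ⟨hx1, hx2⟩ y ⟨hy1, hy2⟩ l ⟨hl0, hl1⟩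
  have h2 := hf gx hgxm gy hgym l ⟨hl0, hl1⟩
  rw [← key] at h2
  rw [← hHdef] at h1
  simp only [symTransform]
  rw [← hgx, ← hgy]
  linarith
end

section
/- If f : [a,b] → ℝ (0 < a < b) is symmetrized harmonically convex (i.e., its symmetrical transform f̆ is harmonically convex) and integrable on [a,b], then f(2ab/(a+b)) ≤ (ab/(b-a)) ∫_a^b f(x)/x² dx ≤ (f(a)+f(b))/2. -/
open intervalIntegral Set MeasureTheory

noncomputable def hRefl (a b t : ℝ) : ℝ := a * b * t / ((a + b) * t - a * b)

section aux
variable {a b : ℝ}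

lemma hD_pos (ha : 0 < a) (hab : a < b) {t : ℝ} (ht : t ∈ Set.Icc a b) : 0 < (a + b) * t - a * b := by
  have := ht.1; have := ht.2; nlinarith

lemma hRefl_mem (ha : 0 < a) (hab : a < b) {t : ℝ} (ht : t ∈ Set.Icc a b) : hRefl a b t ∈ Set.Icc a b := by
  have hD := hD_pos ha hab ht
  have ht1 := ht.1; have ht2 := ht.2
  constructor
  · rw [hRefl, le_div_iff₀ hD]
    nlinarith [mul_nonneg (mul_pos ha ha).le (sub_nonneg.2 ht2)]
  · rw [hRefl, div_le_iff₀ hD]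
    nlinarith [mul_nonneg (mul_pos (ha.trans hab) (ha.trans hab)).le (sub_nonneg.2 ht1)]

lemma hRefl_invol (ha : 0 < a) (hab : a < b) {t : ℝ} (ht : t ∈ Set.Icc a b) : hRefl a b (hRefl a b t) = t := by
  have hD := (hD_pos ha hab ht).ne'
  have hD2 := (hD_pos ha hab (hRefl_mem ha hab ht)).ne'
  rw [hRefl] at hD2 ⊢
  rw [hRefl]
  rw [div_eq_iff hD2]
  have hD' : t * (a + b) - a * b ≠ 0 := by rw [mul_comm]; exact hD
  field_simp
  ring

lemma symTransform_hRefl (ha : 0 < a) (hab : a < b) {t : ℝ} (f : ℝ → ℝ) (ht : t ∈ Set.Icc a b) :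
    symTransform a b f (hRefl a b t) = symTransform a b f t := by
  have key : ∀ x, symTransform a b f x = (1/2) * (f x + f (hRefl a b x)) := fun x => rfl
  rw [key, key, hRefl_invol ha hab ht]
  ring


lemma symTransform_eq {a b : ℝ} (f : ℝ → ℝ) (x : ℝ) :
    symTransform a b f x = (1/2) * (f x + f (hRefl a b x)) := rfl

lemma symTransform_apply_a {a b : ℝ} (ha : 0 < a) (hab : a < b) (f : ℝ → ℝ) :
    symTransform a b f a = (f a + f b) / 2 := by
  have h : hRefl a b a = b := by
    rw [hRefl, div_eq_iff (by nlinarith : (a + b) * a - a * b ≠ 0)]; ring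
  rw [symTransform_eq, h]; ring

lemma symTransform_apply_b {a b : ℝ} (ha : 0 < a) (hab : a < b) (f : ℝ → ℝ) :
    symTransform a b f b = (f a + f b) / 2 := by
  have hb : 0 < b := ha.trans hab
  have h : hRefl a b b = a := by
    rw [hRefl, div_eq_iff (by nlinarith : (a + b) * b - a * b ≠ 0)]; ring
  rw [symTransform_eq, h]; ring

lemma hRefl_mid {a b : ℝ} (ha : 0 < a) (hab : a < b) :
    hRefl a b (2 * a * b / (a + b)) = 2 * a * b / (a + b) := by
  have hb : 0 < b := ha.trans hab
  have hab' : (a + b) ≠ 0 := by positivity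
  have h1 : (a + b) * (2 * a * b / (a + b)) - a * b = a * b := by
    field_simp; ring
  rw [hRefl, h1, mul_comm (a*b), mul_div_assoc, mul_div_assoc,
    div_self (by positivity : a * b ≠ 0), mul_one]

lemma symTransform_mid {a b : ℝ} (ha : 0 < a) (hab : a < b) (f : ℝ → ℝ) :
    symTransform a b f (2 * a * b / (a + b)) = f (2 * a * b / (a + b)) := by
  rw [symTransform_eq, hRefl_mid ha hab]; ring

lemma mid_mem {a b : ℝ} (ha : 0 < a) (hab : a < b) :
    2 * a * b / (a + b) ∈ Set.Icc a b := by
  have hb : 0 < b := ha.trans hab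
  have hab' : (0:ℝ) < a + b := by positivity
  constructor
  · rw [le_div_iff₀ hab']; nlinarith
  · rw [div_le_iff₀ hab']; nlinarith

lemma hRefl_hasDerivAt {a b t : ℝ} (ha : 0 < a) (hab : a < b) (ht : t ∈ Set.Icc a b) :
    HasDerivAt (hRefl a b) (-(a^2 * b^2) / ((a + b) * t - a * b)^2) t := by
  have hD := hD_pos ha hab ht
  have h1 : HasDerivAt (fun t : ℝ => a * b * t) (a * b) t := by
    simpa using (hasDerivAt_id t).const_mul (a * b)
  have h2 : HasDerivAt (fun t : ℝ => (a + b) * t - a * b) (a + b) t := by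
    simpa using ((hasDerivAt_id t).const_mul (a + b)).sub_const (a * b)
  have h3 := h1.div h2 hD.ne'
  refine HasDerivAt.congr_deriv (f := hRefl a b) h3 ?_
  rw [div_eq_div_iff (by positivity) (by positivity)]
  ring

lemma hRefl_injOn {a b : ℝ} (ha : 0 < a) (hab : a < b) :
    Set.InjOn (hRefl a b) (Set.Icc a b) := fun x hx y hy h => by
  rw [← hRefl_invol ha hab hx, h, hRefl_invol ha hab hy]

lemma hRefl_image {a b : ℝ} (ha : 0 < a) (hab : a < b) :
    hRefl a b '' (Set.Icc a b) = Set.Icc a b := by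
  apply Set.Subset.antisymm
  · rintro _ ⟨x, hx, rfl⟩; exact hRefl_mem ha hab hx
  · intro y hy
    exact ⟨hRefl a b y, hRefl_mem ha hab hy, hRefl_invol ha hab hy⟩


lemma pointwise_upper {a b : ℝ} (f : ℝ → ℝ) (ha : 0 < a) (hab : a < b)
    (hshc : ∀ x ∈ Set.Icc a b, ∀ y ∈ Set.Icc a b, ∀ l ∈ Set.Icc (0:ℝ) 1,
      symTransform a b f (x * y / (l * x + (1 - l) * y)) ≤
        (1 - l) * symTransform a b f x + l * symTransform a b f y)
    {t : ℝ} (ht : t ∈ Set.Icc a b) :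
    symTransform a b f t ≤ (f a + f b) / 2 := by
  have hb : 0 < b := ha.trans hab
  have ht0 : 0 < t := ha.trans_le ht.1
  set l : ℝ := b * (t - a) / (t * (b - a)) with hl_def
  have hden : 0 < t * (b - a) := by nlinarith [ht.1]
  have hl : l ∈ Set.Icc (0:ℝ) 1 := by
    constructor
    · apply div_nonneg _ hden.le
      nlinarith [ht.1]
    · rw [div_le_one hden]
      nlinarith [ht.2]
  have key : a * b / (l * a + (1 - l) * b) = t := by
    have h1 : l * a + (1 - l) * b = a * b / t := by
      rw [hl_def]; field_simp [(sub_pos.2 hab).ne']; ring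
    rw [h1, div_div_eq_mul_div, mul_comm, mul_div_assoc,
      div_self (by positivity : a * b ≠ 0), mul_one]
  have h := hshc a ⟨le_refl a, hab.le⟩ b ⟨hab.le, le_refl b⟩ l hl
  rw [key, symTransform_apply_a ha hab, symTransform_apply_b ha hab] at h
  calc symTransform a b f t ≤ (1 - l) * ((f a + f b) / 2) + l * ((f a + f b) / 2) := h
    _ = (f a + f b) / 2 := by ring

lemma pointwise_lower {a b : ℝ} (f : ℝ → ℝ) (ha : 0 < a) (hab : a < b)
    (hshc : ∀ x ∈ Set.Icc a b, ∀ y ∈ Set.Icc a b, ∀ l ∈ Set.Icc (0:ℝ) 1,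
      symTransform a b f (x * y / (l * x + (1 - l) * y)) ≤
        (1 - l) * symTransform a b f x + l * symTransform a b f y)
    {t : ℝ} (ht : t ∈ Set.Icc a b) :
    f (2 * a * b / (a + b)) ≤ symTransform a b f t := by
  have hb : 0 < b := ha.trans hab
  have ht0 : 0 < t := ha.trans_le ht.1
  have hrt := hRefl_mem ha hab ht
  have hrt0 : 0 < hRefl a b t := ha.trans_le hrt.1
  have hhalf : (1/2 : ℝ) ∈ Set.Icc (0:ℝ) 1 := by norm_num
  have h := hshc t ht (hRefl a b t) hrt (1/2) hhalf
  have hden : (1/2 : ℝ) * t + (1 - 1/2) * hRefl a b t ≠ 0 := by positivity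
  have key : t * hRefl a b t / ((1/2 : ℝ) * t + (1 - 1/2) * hRefl a b t)
      = 2 * a * b / (a + b) := by
    rw [div_eq_div_iff hden (by positivity : (a:ℝ) + b ≠ 0)]
    rw [hRefl]
    have hD := (hD_pos ha hab ht).ne'
    have hD' : t * (a + b) - a * b ≠ 0 := by rw [mul_comm]; exact hD
    field_simp
    ring
  rw [key, symTransform_hRefl ha hab f ht, symTransform_mid ha hab] at h
  linarith

end aux
/-- Hermite–Hadamard (İşcan) inequalities for symmetrized harmonically convex
integrable functions. -/
theorem hermite_hadamard_symmetrized_harmonic (a b : ℝ) (f : ℝ → ℝ)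
    (ha : 0 < a) (hab : a < b)
    (hshc : ∀ x ∈ Set.Icc a b, ∀ y ∈ Set.Icc a b, ∀ l ∈ Set.Icc (0:ℝ) 1,
      symTransform a b f (x * y / (l * x + (1 - l) * y)) ≤
        (1 - l) * symTransform a b f x + l * symTransform a b f y)
    (hint : IntervalIntegrable f MeasureTheory.volume a b) :
    f (2 * a * b / (a + b)) ≤ a * b / (b - a) * ∫ x in a..b, f x / x ^ 2 ∧
      a * b / (b - a) * ∫ x in a..b, f x / x ^ 2 ≤ (f a + f b) / 2 := by
  have hb : 0 < b := ha.trans hab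
  have hfIcc : MeasureTheory.IntegrableOn f (Set.Icc a b) := by
    rw [integrableOn_Icc_iff_integrableOn_Ioc]; exact hint.1
  have hcontInv : ContinuousOn (fun x : ℝ => (x^2)⁻¹) (Set.Icc a b) := by
    apply ContinuousOn.inv₀ (continuous_pow 2).continuousOn
    intro x hx; exact pow_ne_zero 2 (ne_of_gt (ha.trans_le hx.1))
  have hG : MeasureTheory.IntegrableOn (fun x => f x / x^2) (Set.Icc a b) := by
    simpa [div_eq_mul_inv] using hfIcc.mul_continuousOn hcontInv isCompact_Icc
  have hderivW : ∀ x ∈ Set.Icc a b, HasDerivWithinAt (hRefl a b)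
      (-(a^2*b^2)/((a+b)*x - a*b)^2) (Set.Icc a b) x :=
    fun x hx => (hRefl_hasDerivAt ha hab hx).hasDerivWithinAt
  have heqon : Set.EqOn
      (fun x => |(-(a^2*b^2)/((a+b)*x - a*b)^2)| • ((fun y => f y / y^2) (hRefl a b x)))
      (fun x => f (hRefl a b x) / x^2) (Set.Icc a b) := by
    intro x hx
    have hD := hD_pos ha hab hx
    have hx0 : 0 < x := ha.trans_le hx.1
    have hr0 : 0 < hRefl a b x := ha.trans_le (hRefl_mem ha hab hx).1
    simp only [smul_eq_mul]
    rw [abs_div, abs_neg, abs_of_pos (by positivity : (0:ℝ) < a^2*b^2),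
      abs_of_pos (by positivity : (0:ℝ) < ((a+b)*x - a*b)^2)]
    rw [div_mul_div_comm, div_eq_div_iff (by positivity) (by positivity)]
    have hrx : hRefl a b x = a * b * x / ((a+b)*x - a*b) := rfl
    rw [hrx] at hr0 ⊢
    have hD' : x * (a + b) - a * b ≠ 0 := by rw [mul_comm]; exact hD.ne'
    field_simp
  have himg_int : MeasureTheory.IntegrableOn (fun x => f (hRefl a b x) / x^2)
      (Set.Icc a b) := by
    have h0 : MeasureTheory.IntegrableOn (fun y => f y / y^2)
        (hRefl a b '' Set.Icc a b) := by rw [hRefl_image ha hab]; exact hG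
    have h1 := (MeasureTheory.integrableOn_image_iff_integrableOn_abs_deriv_smul
      measurableSet_Icc hderivW (hRefl_injOn ha hab) (fun y => f y / y^2)).1 h0
    exact h1.congr_fun heqon measurableSet_Icc
  have hEq : (∫ x in Set.Icc a b, f (hRefl a b x) / x^2) = ∫ x in Set.Icc a b, f x / x^2 := by
    have h := MeasureTheory.integral_image_eq_integral_abs_deriv_smul
      measurableSet_Icc hderivW (hRefl_injOn ha hab) (fun y => f y / y^2)
    rw [hRefl_image ha hab] at h
    rw [MeasureTheory.setIntegral_congr_fun measurableSet_Icc heqon] at h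
    exact h.symm
  have hfun : (fun x => symTransform a b f x / x^2)
      = fun x => (1/2) * (f x / x^2) + (1/2) * (f (hRefl a b x) / x^2) := by
    funext x; rw [symTransform_eq]; ring
  have hSint : MeasureTheory.IntegrableOn (fun x => symTransform a b f x / x^2)
      (Set.Icc a b) := by
    rw [hfun]; exact (hG.const_mul _).add (himg_int.const_mul _)
  have hsum : (∫ x in Set.Icc a b, symTransform a b f x / x^2)
      = ∫ x in Set.Icc a b, f x / x^2 := by
    rw [hfun, MeasureTheory.integral_add (hG.const_mul _) (himg_int.const_mul _),
      MeasureTheory.integral_const_mul, MeasureTheory.integral_const_mul, hEq]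
    ring
  have hpow : (∫ x in Set.Icc a b, ((x:ℝ)^2)⁻¹) = a⁻¹ - b⁻¹ := by
    rw [MeasureTheory.integral_Icc_eq_integral_Ioc, ← intervalIntegral.integral_of_le hab.le]
    have h0 : (0:ℝ) ∉ Set.uIcc a b := by
      rw [Set.uIcc_of_le hab.le]; intro h; exact absurd h.1 (not_le.2 ha)
    have hz : ∀ x : ℝ, (x^2)⁻¹ = x ^ (-2 : ℤ) := fun x => by
      rw [zpow_neg]; norm_cast
    simp_rw [hz]
    rw [integral_zpow (Or.inr ⟨by norm_num, h0⟩)]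
    norm_num
    field_simp
    ring
  have hlowInt : MeasureTheory.IntegrableOn
      (fun x => f (2*a*b/(a+b)) * (x^2)⁻¹) (Set.Icc a b) :=
    (continuousOn_const.mul hcontInv).integrableOn_Icc
  have hupInt : MeasureTheory.IntegrableOn
      (fun x => ((f a + f b)/2) * (x^2)⁻¹) (Set.Icc a b) :=
    (continuousOn_const.mul hcontInv).integrableOn_Icc
  have hlow : (∫ x in Set.Icc a b, f (2*a*b/(a+b)) * (x^2)⁻¹)
      ≤ ∫ x in Set.Icc a b, symTransform a b f x / x^2 := by
    apply MeasureTheory.setIntegral_mono_on hlowInt hSint measurableSet_Icc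
    intro x hx
    have hp := pointwise_lower f ha hab hshc hx
    rw [← div_eq_mul_inv]
    gcongr
  have hup : (∫ x in Set.Icc a b, symTransform a b f x / x^2)
      ≤ ∫ x in Set.Icc a b, ((f a + f b)/2) * (x^2)⁻¹ := by
    apply MeasureTheory.setIntegral_mono_on hSint hupInt measurableSet_Icc
    intro x hx
    have hp := pointwise_upper f ha hab hshc hx
    rw [← div_eq_mul_inv]
    gcongr
  rw [MeasureTheory.integral_const_mul, hpow, hsum] at hlow hup
  have hI : (∫ x in a..b, f x / x ^ 2) = ∫ x in Set.Icc a b, f x / x^2 := by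
    rw [intervalIntegral.integral_of_le hab.le, MeasureTheory.integral_Icc_eq_integral_Ioc]
  have hconv : a⁻¹ - b⁻¹ = (b - a)/(a * b) := by
    field_simp
  rw [hconv] at hlow hup
  have hpos : (0:ℝ) < a * b / (b - a) := by
    apply div_pos (by positivity); linarith
  have hone : a*b/(b-a) * ((b-a)/(a*b)) = 1 := by
    have hba : (0:ℝ) < b - a := by linarith
    rw [div_mul_div_comm, div_eq_one_iff_eq (by positivity : (b-a)*(a*b) ≠ 0)]
    ring
  constructor
  · rw [hI]
    calc f (2*a*b/(a+b)) = a*b/(b-a) * (f (2*a*b/(a+b)) * ((b-a)/(a*b))) := by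
          rw [mul_comm (f (2*a*b/(a+b))), ← mul_assoc, hone, one_mul]
      _ ≤ a*b/(b-a) * ∫ x in Set.Icc a b, f x / x^2 :=
          mul_le_mul_of_nonneg_left hlow hpos.le
  · rw [hI]
    calc a*b/(b-a) * ∫ x in Set.Icc a b, f x / x^2
          ≤ a*b/(b-a) * ((f a + f b)/2 * ((b-a)/(a*b))) :=
          mul_le_mul_of_nonneg_left hup hpos.le
      _ = (f a + f b)/2 := by
          rw [mul_comm ((f a + f b)/2), ← mul_assoc, hone, one_mul]
end

section
/- If f : [a,b] → ℝ (0 < a < b) is symmetrized harmonically convex on [a,b], then for every x ∈ [a,b]: f(2ab/(a+b)) ≤ f̆(x) ≤ (f(a)+f(b))/2, where f̆(x) = (1/2)[f(x) + f(abx/((a+b)x - ab))]. -/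
/-- Pointwise bounds for the symmetrical transform of a symmetrized
harmonically convex function. -/
theorem symTransform_bounds (a b : ℝ) (f : ℝ → ℝ)
    (ha : 0 < a) (hab : a < b)
    (hshc : ∀ x ∈ Set.Icc a b, ∀ y ∈ Set.Icc a b, ∀ l ∈ Set.Icc (0:ℝ) 1,
      symTransform a b f (x * y / (l * x + (1 - l) * y)) ≤
        (1 - l) * symTransform a b f x + l * symTransform a b f y) :
    ∀ x ∈ Set.Icc a b,
      f (2 * a * b / (a + b)) ≤ symTransform a b f x ∧
        symTransform a b f x ≤ (f a + f b) / 2 := by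
  intro x hx
  obtain ⟨hax, hxb⟩ := hx
  have hb : 0 < b := ha.trans hab
  have hx0 : 0 < x := lt_of_lt_of_le ha hax
  have hab0 : 0 < a + b := by linarith
  have hD : 0 < (a + b) * x - a * b := by nlinarith
  set y := a * b * x / ((a + b) * x - a * b) with hy
  have hy0 : 0 < y := by positivity
  have hya : a ≤ y := by
    rw [hy, le_div_iff₀ hD]
    nlinarith [mul_nonneg (mul_nonneg ha.le ha.le) (sub_nonneg.mpr hxb)]
  have hyb : y ≤ b := by
    rw [hy, div_le_iff₀ hD]
    nlinarith [mul_nonneg (mul_nonneg hb.le hb.le) (sub_nonneg.mpr hax)]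
  -- symTransform of y equals that of x
  have hconj : a * b * y / ((a + b) * y - a * b) = x := by
    have hden : (a + b) * y - a * b = a * b * (a * b) / ((a + b) * x - a * b) := by
      rw [hy]; field_simp; ring
    rw [hden, hy]
    rw [div_eq_iff (by positivity : a * b * (a * b) / ((a + b) * x - a * b) ≠ 0)]
    field_simp
  have hgy : symTransform a b f y = symTransform a b f x := by
    unfold symTransform
    rw [hconj, ← hy]
    ring
  -- value at the harmonic midpoint
  have hmid : symTransform a b f (2 * a * b / (a + b)) = f (2 * a * b / (a + b)) := by
    unfold symTransform
    have h1 : (a + b) * (2 * a * b / (a + b)) - a * b = a * b := by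
      field_simp; ring
    rw [h1]
    have h2 : a * b * (2 * a * b / (a + b)) / (a * b) = 2 * a * b / (a + b) := by
      rw [mul_div_cancel_left₀ _ (by positivity : a * b ≠ 0)]
    rw [h2]; ring
  constructor
  · -- lower bound
    have h := hshc x ⟨hax, hxb⟩ y ⟨hya, hyb⟩ (1/2) ⟨by norm_num, by norm_num⟩
    have harg : x * y / ((1/2 : ℝ) * x + (1 - 1/2) * y) = 2 * a * b / (a + b) := by
      have hs : (0:ℝ) < (1/2 : ℝ) * x + (1 - 1/2) * y := by positivity
      rw [div_eq_div_iff hs.ne' hab0.ne', hy]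
      field_simp [hD.ne']
      field_simp [(by nlinarith : (0:ℝ) < x * (a + b) - a * b).ne']
      ring
    rw [harg, hgy] at h
    rw [← hmid]
    linarith
  · -- upper bound
    set l := b * (x - a) / (x * (b - a)) with hl
    have hl0 : 0 ≤ l := by
      apply div_nonneg
      · nlinarith
      · nlinarith
    have hl1 : l ≤ 1 := by
      rw [hl, div_le_one (by nlinarith)]
      nlinarith
    have h := hshc a ⟨le_refl a, le_of_lt hab⟩ b ⟨le_of_lt hab, le_refl b⟩ l ⟨hl0, hl1⟩
    have harg : a * b / (l * a + (1 - l) * b) = x := by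
      have hden : l * a + (1 - l) * b = a * b / x := by
        rw [hl, eq_div_iff hx0.ne']
        have hne : x * (b - a) ≠ 0 := mul_ne_zero hx0.ne' (sub_pos.mpr hab).ne'
        field_simp [hne, (sub_pos.mpr hab).ne']
        ring
      rw [hden]
      rw [div_div_eq_mul_div, mul_comm (a*b) x, mul_div_assoc,
        div_self (by positivity : a * b ≠ 0), mul_one]
    have hga : symTransform a b f a = (1/2) * (f a + f b) := by
      unfold symTransform
      have : a * b * a / ((a + b) * a - a * b) = b := by
        have : (a + b) * a - a * b = a * a := by ring
        rw [this]
        rw [div_eq_iff (by positivity : a * a ≠ 0)]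
        ring
      rw [this]
    have hgb : symTransform a b f b = (1/2) * (f a + f b) := by
      unfold symTransform
      have : a * b * b / ((a + b) * b - a * b) = a := by
        have : (a + b) * b - a * b = b * b := by ring
        rw [this]
        rw [div_eq_iff (by positivity : b * b ≠ 0)]
        ring
      rw [this]; ring
    rw [harg, hga, hgb] at h
    calc symTransform a b f x ≤ (1 - l) * ((1/2) * (f a + f b)) + l * ((1/2) * (f a + f b)) := h
      _ = (f a + f b) / 2 := by ring
end

section
/- If f : [a,b] → ℝ (0 < a < b) is symmetrized harmonically convex on [a,b], then inf_{x∈[a,b]} f̆(x) = f(2ab/(a+b)) and sup_{x∈[a,b]} f̆(x) = (f(a)+f(b))/2, with the infimum attained at x = 2ab/(a+b) and the supremum attained at x = a (and x = b). -/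
/-- The infimum of `f̆` on `[a,b]` equals `f(2ab/(a+b))`, attained at
`x = 2ab/(a+b)`, and the supremum equals `(f a + f b)/2`, attained at `a` and `b`. -/
theorem symTransform_inf_sup (a b : ℝ) (f : ℝ → ℝ)
    (ha : 0 < a) (hab : a < b)
    (hshc : ∀ x ∈ Set.Icc a b, ∀ y ∈ Set.Icc a b, ∀ l ∈ Set.Icc (0:ℝ) 1,
      symTransform a b f (x * y / (l * x + (1 - l) * y)) ≤
        (1 - l) * symTransform a b f x + l * symTransform a b f y) :
    IsLeast (symTransform a b f '' Set.Icc a b) (f (2 * a * b / (a + b))) ∧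
      IsGreatest (symTransform a b f '' Set.Icc a b) ((f a + f b) / 2) ∧
      symTransform a b f (2 * a * b / (a + b)) = f (2 * a * b / (a + b)) ∧
      symTransform a b f a = (f a + f b) / 2 ∧
      symTransform a b f b = (f a + f b) / 2 := by
  have hb : 0 < b := ha.trans hab
  have hab0 : 0 < a + b := by linarith
  set m := 2 * a * b / (a + b) with hm
  have hmmem : m ∈ Set.Icc a b := by
    constructor
    · rw [hm, le_div_iff₀ hab0]; nlinarith
    · rw [hm, div_le_iff₀ hab0]; nlinarith
  have hga : symTransform a b f a = (f a + f b) / 2 := by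
    unfold symTransform
    have h1 : (a + b) * a - a * b = a * a := by ring
    have h2 : a * b * a / ((a + b) * a - a * b) = b := by
      rw [h1]; field_simp
    rw [h2]; ring
  have hgb : symTransform a b f b = (f a + f b) / 2 := by
    unfold symTransform
    have h1 : (a + b) * b - a * b = b * b := by ring
    have h2 : a * b * b / ((a + b) * b - a * b) = a := by
      rw [h1]; field_simp
    rw [h2]; ring
  have hgm : symTransform a b f m = f m := by
    unfold symTransform
    have h1 : (a + b) * m - a * b = a * b := by
      rw [hm]; field_simp; ring
    have h2 : a * b * m / ((a + b) * m - a * b) = m := by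
      rw [h1, mul_comm (a * b) m, mul_div_assoc, div_self (by positivity), mul_one]
    rw [h2]; ring
  -- lower bound
  have hlow : ∀ x ∈ Set.Icc a b, f m ≤ symTransform a b f x := by
    rintro x ⟨hxa, hxb⟩
    have hx0 : 0 < x := lt_of_lt_of_le ha hxa
    have hD : 0 < (a + b) * x - a * b := by nlinarith
    set y := a * b * x / ((a + b) * x - a * b) with hy
    have hymem : y ∈ Set.Icc a b := by
      constructor
      · rw [hy, le_div_iff₀ hD]
        nlinarith [mul_le_mul_of_nonneg_left hxb (le_of_lt (mul_pos ha ha))]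
      · rw [hy, div_le_iff₀ hD]
        nlinarith [mul_le_mul_of_nonneg_left hxa (le_of_lt (mul_pos hb hb))]
    have hD2 : 0 < (a + b) * y - a * b := by
      nlinarith [mul_le_mul_of_nonneg_left hymem.1 (le_of_lt hab0)]
    have hgy : symTransform a b f y = symTransform a b f x := by
      unfold symTransform
      have h2 : a * b * y / ((a + b) * y - a * b) = x := by
        rw [div_eq_iff hD2.ne', hy]
        generalize hG : (a + b) * x - a * b = D at hD ⊢
        field_simp
        linear_combination -hG
      rw [h2, hy]; ring
    have harg : x * y / ((1/2 : ℝ) * x + (1 - 1/2) * y) = m := by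
      rw [hy, hm]
      generalize hG : (a + b) * x - a * b = D at hD ⊢
      field_simp
      linear_combination hG
    have key := hshc x ⟨hxa, hxb⟩ y hymem (1/2) ⟨by norm_num, by norm_num⟩
    rw [harg, hgy, hgm] at key
    linarith
  -- upper bound
  have hhigh : ∀ z ∈ Set.Icc a b, symTransform a b f z ≤ (f a + f b) / 2 := by
    rintro z ⟨hza, hzb⟩
    have hz0 : 0 < z := lt_of_lt_of_le ha hza
    have hba : 0 < b - a := by linarith
    set l := b * (z - a) / (z * (b - a)) with hl
    have hl0 : 0 ≤ l := by
      apply div_nonneg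
      · nlinarith
      · positivity
    have hl1 : l ≤ 1 := by
      rw [hl, div_le_one (by positivity)]; nlinarith
    have harg : a * b / (l * a + (1 - l) * b) = z := by
      have hE : l * a + (1 - l) * b = a * b / z := by
        rw [hl]; field_simp; ring
      rw [hE]
      field_simp
    have key := hshc a ⟨le_refl a, le_of_lt hab⟩ b ⟨le_of_lt hab, le_refl b⟩ l ⟨hl0, hl1⟩
    rw [harg, hga, hgb] at key
    linarith
  refine ⟨⟨⟨m, hmmem, hgm⟩, ?_⟩, ⟨⟨a, ⟨le_refl a, le_of_lt hab⟩, hga⟩, ?_⟩, hgm, hga, hgb⟩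
  · rintro v ⟨x, hx, rfl⟩; exact hlow x hx
  · rintro v ⟨x, hx, rfl⟩; exact hhigh x hx
end

section
/- Let f : [a,b] → ℝ (0 < a < b) be symmetrized harmonically convex and integrable on [a,b]. Then for any x, y ∈ [a,b] with x ≠ y: (1/2)[f(2xy/(x+y)) + f(2abxy/(2xy(a+b) - ab(x+y)))] ≤ (xy/(2(y-x)))[∫_x^y f(t)/t² dt + ∫_{aby/((a+b)y-ab)}^{abx/((a+b)x-ab)} f(t)/t² dt] ≤ (1/4)[f(x) + f(abx/((a+b)x-ab)) + f(y) + f(aby/((a+b)y-ab))]. -/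
open intervalIntegral

open Set MeasureTheory

lemma hh_pair {h : ℝ → ℝ} {α β : ℝ} (hlt : α < β)
    (hc : ∀ s ∈ Icc α β, ∀ t ∈ Icc α β, ∀ l ∈ Icc (0:ℝ) 1,
      h ((1-l)*s + l*t) ≤ (1-l)*h s + l*h t)
    (hint : IntervalIntegrable h volume α β) :
    (β - α) * h ((α+β)/2) ≤ (∫ t in α..β, h t) ∧
    (∫ t in α..β, h t) ≤ (β - α) * (h α + h β) / 2 := by
  have hαβ : α ∈ Icc α β := ⟨le_refl _, hlt.le⟩
  have hβα : β ∈ Icc α β := ⟨hlt.le, le_refl _⟩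
  constructor
  · have hint2 : IntervalIntegrable (fun t => h (α + β - t)) volume α β := by
      have := (hint.comp_sub_left (α + β)).symm
      simpa using this
    have hrefl : (∫ t in α..β, h (α + β - t)) = ∫ t in α..β, h t := by
      rw [intervalIntegral.integral_comp_sub_left h (α+β)]
      norm_num
    have hbound : ∀ t ∈ Icc α β, (fun _ : ℝ => h ((α+β)/2)) t ≤
        (fun t => (1/2) * h t + (1/2) * h (α+β-t)) t := by
      intro t ht
      have h1 : α + β - t ∈ Icc α β := ⟨by linarith [ht.2], by linarith [ht.1]⟩
      have h2 := hc t ht (α+β-t) h1 (1/2) (by norm_num)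
      have e : (1-(1/2:ℝ))*t + (1/2)*(α+β-t) = (α+β)/2 := by ring
      rw [e] at h2
      simp only
      linarith
    have hmono := intervalIntegral.integral_mono_on hlt.le intervalIntegrable_const
      ((hint.const_mul _).add (hint2.const_mul _)) hbound
    rw [intervalIntegral.integral_const, intervalIntegral.integral_add (hint.const_mul _)
      (hint2.const_mul _), intervalIntegral.integral_const_mul,
      intervalIntegral.integral_const_mul, hrefl] at hmono
    simp only [smul_eq_mul] at hmono
    linarith
  · set Δ := (h β - h α) / (β - α) with hΔ
    have hβα0 : β - α ≠ 0 := ne_of_gt (by linarith)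
    have hbound : ∀ t ∈ Icc α β, h t ≤
        (fun t => (h α - α * Δ) + Δ * t) t := by
      intro t ht
      set l := (t - α)/(β - α) with hl
      have hl0 : 0 ≤ l := div_nonneg (by linarith [ht.1]) (by linarith)
      have hl1 : l ≤ 1 := (div_le_one (by linarith)).2 (by linarith [ht.2])
      have h2 := hc α hαβ β hβα l ⟨hl0, hl1⟩
      have e : (1-l)*α + l*β = t := by
        field_simp [hl]
        have hl' : l * (β - α) = t - α := by rw [hl]; field_simp
        linear_combination hl'
      rw [e] at h2
      have e2 : (1-l)*h α + l * h β = (h α - α * Δ) + Δ * t := by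
        field_simp [hl, hΔ]
        ring
      rw [e2] at h2
      exact h2
    have hcont : IntervalIntegrable (fun t => (h α - α * Δ) + Δ * t) volume α β :=
      (Continuous.intervalIntegrable (by continuity) _ _)
    have hmono := intervalIntegral.integral_mono_on hlt.le hint hcont hbound
    have h1 : IntervalIntegrable (fun u : ℝ => Δ * u) volume α β :=
      (continuous_const.mul continuous_id).intervalIntegrable _ _
    rw [intervalIntegral.integral_add intervalIntegrable_const h1,
      intervalIntegral.integral_const, intervalIntegral.integral_const_mul,
      integral_id] at hmono
    simp only [smul_eq_mul] at hmono
    have : (β - α) * (h α - α * Δ) + Δ * ((β^2 - α^2)/2) = (β - α) * (h α + h β) / 2 := by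
      field_simp [hΔ]
      have hΔ' : Δ * (β - α) = h β - h α := by rw [hΔ]; field_simp
      linear_combination (β - α) * hΔ'
    linarith

lemma inv_img {p q : ℝ} (hp : 0 < p) (hpq : p ≤ q) :
    (fun s : ℝ => 1/s) '' Icc (1/q) (1/p) = Icc p q := by
  have hq : 0 < q := hp.trans_le hpq
  ext t
  constructor
  · rintro ⟨s, hs, rfl⟩
    have hs0 : 0 < s := lt_of_lt_of_le (by positivity) hs.1
    exact ⟨by rw [le_one_div hp hs0]; exact hs.2, by rw [one_div_le hs0 hq]; exact hs.1⟩
  · intro ht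
    have ht0 : 0 < t := lt_of_lt_of_le hp ht.1
    exact ⟨1/t, ⟨one_div_le_one_div_of_le ht0 ht.2,
      one_div_le_one_div_of_le hp ht.1⟩, by simp [one_div_one_div]⟩

lemma inv_subst {f : ℝ → ℝ} {p q : ℝ} (hp : 0 < p) (hpq : p ≤ q)
    (hf : IntegrableOn (fun t => f t / t^2) (Icc p q) volume) :
    IntegrableOn (fun s => f (1/s)) (Icc (1/q) (1/p)) volume ∧
    (∫ t in p..q, f t / t^2) = ∫ s in (1/q)..(1/p), f (1/s) := by
  have hq : 0 < q := hp.trans_le hpq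
  have hqp' : (1:ℝ)/q ≤ 1/p := one_div_le_one_div_of_le hp hpq
  have hset : MeasurableSet (Icc (1/q) (1/p)) := measurableSet_Icc
  have hpos : ∀ s ∈ Icc (1/q) (1/p), 0 < s := fun s hs =>
    lt_of_lt_of_le (by positivity) hs.1
  have hder : ∀ s ∈ Icc (1/q) (1/p), HasDerivWithinAt (fun s : ℝ => 1/s) (-(s^2)⁻¹)
      (Icc (1/q) (1/p)) s := by
    intro s hs
    simpa [one_div] using (hasDerivAt_inv (ne_of_gt (hpos s hs))).hasDerivWithinAt
  have hinj : InjOn (fun s : ℝ => 1/s) (Icc (1/q) (1/p)) := by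
    intro u hu v hv huv
    have : u⁻¹ = v⁻¹ := by simpa [one_div] using huv
    exact inv_injective this
  have himg := inv_img hp hpq
  have hptw : ∀ s ∈ Icc (1/q) (1/p),
      |(-(s^2)⁻¹)| • ((fun t => f t / t^2) ((fun s : ℝ => 1/s) s)) = f (1/s) := by
    intro s hs
    have hs0 : 0 < s := hpos s hs
    have : |(-(s^2)⁻¹)| = (s^2)⁻¹ := by
      rw [abs_neg, abs_of_nonneg (by positivity)]
    simp only [this, smul_eq_mul]
    field_simp
  constructor
  · have h2 := (integrableOn_image_iff_integrableOn_abs_deriv_smul hset hder hinj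
      (fun t => f t / t^2))
    rw [himg] at h2
    exact (IntegrableOn.congr_fun (h2.mp hf) hptw hset)
  · have h1 := integral_image_eq_integral_abs_deriv_smul hset hder hinj
      (fun t => f t / t^2)
    rw [himg] at h1
    rw [intervalIntegral.integral_of_le hpq, intervalIntegral.integral_of_le hqp',
      ← MeasureTheory.integral_Icc_eq_integral_Ioc, ← MeasureTheory.integral_Icc_eq_integral_Ioc,
      h1]
    exact MeasureTheory.setIntegral_congr_fun hset hptw

lemma D_pos {a b t : ℝ} (ha : 0 < a) (hab : a < b) (ht : a ≤ t) :
    0 < (a + b) * t - a * b := by nlinarith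

lemma sigma_mem {a b t : ℝ} (ha : 0 < a) (hab : a < b) (ht : t ∈ Icc a b) :
    a * b * t / ((a + b) * t - a * b) ∈ Icc a b := by
  have hD : 0 < (a + b) * t - a * b := D_pos ha hab ht.1
  constructor
  · rw [le_div_iff₀ hD]; nlinarith [mul_nonneg (mul_nonneg ha.le ha.le) (sub_nonneg.2 ht.2)]
  · rw [div_le_iff₀ hD]; nlinarith [mul_nonneg (mul_nonneg (ha.trans hab).le (ha.trans hab).le) (sub_nonneg.2 ht.1)]

lemma sigma_eq {a b t : ℝ} (ha : 0 < a) (hab : a < b) (ht : t ∈ Icc a b) :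
    a * b * t / ((a + b) * t - a * b) = 1 / (1/a + 1/b - 1/t) := by
  have hb : 0 < b := ha.trans hab
  have ht0 : 0 < t := lt_of_lt_of_le ha ht.1
  have hD : 0 < (a + b) * t - a * b := D_pos ha hab ht.1
  have hc : 0 < 1/a + 1/b - 1/t := by
    have h1 : 1/t ≤ 1/a := one_div_le_one_div_of_le ha ht.1
    have h2 : 0 < 1/b := by positivity
    linarith
  rw [div_eq_div_iff (ne_of_gt hD) (ne_of_gt hc)]
  field_simp
  ring

/-- symTransform at 1/s, for s in [1/b, 1/a]. -/
lemma symTransform_inv {a b : ℝ} {f : ℝ → ℝ} {s : ℝ} (ha : 0 < a) (hab : a < b)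
    (hs : s ∈ Icc (1/b) (1/a)) :
    symTransform a b f (1/s) =
      (1/2) * (f (1/s) + f (1/(1/a + 1/b - s))) := by
  have hb : 0 < b := ha.trans hab
  have hs0 : 0 < s := lt_of_lt_of_le (by positivity) hs.1
  have hmem : 1/s ∈ Icc a b := by
    constructor
    · rw [le_one_div ha hs0]; exact hs.2
    · rw [one_div_le hs0 hb]; exact hs.1
  have e : a * b * (1/s) / ((a + b) * (1/s) - a * b) = 1 / (1/a + 1/b - s) := by
    rw [sigma_eq ha hab hmem, one_div_one_div]
  rw [symTransform, e]

lemma core_lt (a b : ℝ) (f : ℝ → ℝ) (ha : 0 < a) (hab : a < b)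
    (hshc : ∀ x ∈ Set.Icc a b, ∀ y ∈ Set.Icc a b, ∀ l ∈ Set.Icc (0:ℝ) 1,
      symTransform a b f (x * y / (l * x + (1 - l) * y)) ≤
        (1 - l) * symTransform a b f x + l * symTransform a b f y)
    (hint : IntervalIntegrable f MeasureTheory.volume a b) :
    ∀ x ∈ Set.Icc a b, ∀ y ∈ Set.Icc a b, x < y →
      (1/2) * (f (2 * x * y / (x + y)) +
          f (2 * a * b * x * y / (2 * x * y * (a + b) - a * b * (x + y)))) ≤
        x * y / (2 * (y - x)) *
          ((∫ t in x..y, f t / t ^ 2) +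
            ∫ t in (a * b * y / ((a + b) * y - a * b))..(a * b * x / ((a + b) * x - a * b)),
              f t / t ^ 2) ∧
      x * y / (2 * (y - x)) *
          ((∫ t in x..y, f t / t ^ 2) +
            ∫ t in (a * b * y / ((a + b) * y - a * b))..(a * b * x / ((a + b) * x - a * b)),
              f t / t ^ 2) ≤
        (1/4) * (f x + f (a * b * x / ((a + b) * x - a * b)) + f y +
          f (a * b * y / ((a + b) * y - a * b))) := by
  intro x hx y hy hxy
  have hb : 0 < b := ha.trans hab
  have hx0 : 0 < x := lt_of_lt_of_le ha hx.1
  have hy0 : 0 < y := lt_of_lt_of_le ha hy.1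
  have hXY : 1/y < 1/x := one_div_lt_one_div_of_lt hx0 hxy
  have hXba : Icc (1/y) (1/x) ⊆ Icc (1/b) (1/a) :=
    Icc_subset_Icc (one_div_le_one_div_of_le hy0 hy.2) (one_div_le_one_div_of_le ha hx.1)
  set h : ℝ → ℝ := fun s => (1/2) * (f (1/s) + f (1/((1/a + 1/b) - s))) with hh
  have hspos : ∀ s ∈ Icc (1/y) (1/x), 0 < s := fun s hs =>
    lt_of_lt_of_le (by positivity) (hXba hs).1
  have hinvmem : ∀ s ∈ Icc (1/y) (1/x), 1/s ∈ Icc a b := by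
    intro s hs
    have h1 := hXba hs
    have hs0 := hspos s hs
    exact ⟨(le_one_div ha hs0).2 h1.2, (one_div_le hs0 hb).2 h1.1⟩
  have hsym : ∀ s ∈ Icc (1/y) (1/x), h s = symTransform a b f (1/s) := by
    intro s hs
    rw [symTransform_inv ha hab (hXba hs), hh]
  -- convexity
  have hconv : ∀ s ∈ Icc (1/y) (1/x), ∀ t ∈ Icc (1/y) (1/x), ∀ l ∈ Icc (0:ℝ) 1,
      h ((1-l)*s + l*t) ≤ (1-l)*h s + l*h t := by
    intro s hs t ht l hl
    have hs0 := hspos s hs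
    have ht0 := hspos t ht
    have hcomb : (1-l)*s + l*t ∈ Icc (1/y) (1/x) := by
      constructor
      · nlinarith [hs.1, ht.1, hl.1, hl.2]
      · nlinarith [hs.2, ht.2, hl.1, hl.2]
    have hcomb0 : 0 < (1-l)*s + l*t := hspos _ hcomb
    have key := hshc (1/s) (hinvmem s hs) (1/t) (hinvmem t ht) l hl
    have hd1 : l * (1/s) + (1-l) * (1/t) = ((1-l)*s + l*t)/(s*t) := by
      field_simp; ring
    have hd1pos : 0 < l * (1/s) + (1-l) * (1/t) := by rw [hd1]; positivity
    have e : (1/s) * (1/t) / (l * (1/s) + (1-l) * (1/t)) = 1/((1-l)*s + l*t) := by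
      rw [div_eq_div_iff (ne_of_gt hd1pos) (ne_of_gt hcomb0)]
      field_simp
      ring
    rw [e] at key
    rw [hsym s hs, hsym t ht, hsym _ hcomb]
    exact key
  -- integrability of f t / t^2 on subintervals of [a,b]
  have hfi : ∀ p q : ℝ, p ∈ Icc a b → q ∈ Icc a b →
      IntervalIntegrable (fun t => f t / t^2) volume p q := by
    intro p q hp hq
    have hsub : uIcc p q ⊆ Icc a b := by
      rw [← uIcc_of_le hab.le]
      exact uIcc_subset_uIcc (by rw [uIcc_of_le hab.le]; exact hp)
        (by rw [uIcc_of_le hab.le]; exact hq)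
    have h1 : IntervalIntegrable f volume p q :=
      hint.mono_set (by rw [uIcc_of_le hab.le]; exact hsub)
    have h2 : ContinuousOn (fun t : ℝ => (t^2)⁻¹) (uIcc p q) := by
      apply ContinuousOn.inv₀ ((continuous_pow 2).continuousOn)
      intro t ht
      have h3 : 0 < t := lt_of_lt_of_le ha (hsub ht).1
      positivity
    simpa [div_eq_mul_inv] using h1.mul_continuousOn h2
  -- first substitution
  have hIxy : IntegrableOn (fun t => f t / t^2) (Icc x y) volume :=
    (intervalIntegrable_iff_integrableOn_Icc_of_le hxy.le).1 (hfi x y hx hy)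
  obtain ⟨hI1, hE1⟩ := inv_subst hx0 hxy.le hIxy
  -- sigma values
  have hpmem : a * b * y / ((a + b) * y - a * b) ∈ Icc a b := sigma_mem ha hab hy
  have hqmem : a * b * x / ((a + b) * x - a * b) ∈ Icc a b := sigma_mem ha hab hx
  have hpeq : a * b * y / ((a + b) * y - a * b) = 1/((1/a + 1/b) - 1/y) := by
    rw [sigma_eq ha hab hy]
  have hqeq : a * b * x / ((a + b) * x - a * b) = 1/((1/a + 1/b) - 1/x) := by
    rw [sigma_eq ha hab hx]
  have hcX : 0 < (1/a + 1/b) - 1/y := by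
    have h1 : 1/y ≤ 1/a := one_div_le_one_div_of_le ha hy.1
    have h2 : 0 < 1/b := by positivity
    linarith
  have hcY : 0 < (1/a + 1/b) - 1/x := by
    have h1 : 1/x ≤ 1/a := one_div_le_one_div_of_le ha hx.1
    have h2 : 0 < 1/b := by positivity
    linarith
  have hpq : a * b * y / ((a + b) * y - a * b) ≤ a * b * x / ((a + b) * x - a * b) := by
    rw [hpeq, hqeq]
    exact one_div_le_one_div_of_le hcY (by linarith)
  have hp0 : 0 < a * b * y / ((a + b) * y - a * b) := lt_of_lt_of_le ha hpmem.1
  have hIpq : IntegrableOn (fun t => f t / t^2)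
      (Icc (a * b * y / ((a + b) * y - a * b)) (a * b * x / ((a + b) * x - a * b))) volume :=
    (intervalIntegrable_iff_integrableOn_Icc_of_le hpq).1 (hfi _ _ hpmem hqmem)
  obtain ⟨hI2, hE2⟩ := inv_subst hp0 hpq hIpq
  have h1q : 1/(a * b * x / ((a + b) * x - a * b)) = (1/a + 1/b) - 1/x := by
    rw [hqeq, one_div_one_div]
  have h1p : 1/(a * b * y / ((a + b) * y - a * b)) = (1/a + 1/b) - 1/y := by
    rw [hpeq, one_div_one_div]
  rw [h1q, h1p] at hE2 hI2
  -- reflection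
  have hrefl : (∫ s in (1/y)..(1/x), f (1/((1/a + 1/b) - s))) =
      ∫ r in ((1/a + 1/b) - 1/x)..((1/a + 1/b) - 1/y), f (1/r) :=
    intervalIntegral.integral_comp_sub_left (fun r => f (1/r)) ((1/a + 1/b))
  have hI2' : IntervalIntegrable (fun s => f (1/((1/a + 1/b) - s))) volume (1/y) (1/x) := by
    have h0 : IntervalIntegrable (fun r => f (1/r)) volume
        ((1/a + 1/b) - 1/x) ((1/a + 1/b) - 1/y) := by
      rw [intervalIntegrable_iff_integrableOn_Icc_of_le (by linarith)]
      exact hI2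
    have h1 := h0.comp_sub_left (1/a + 1/b)
    have h2 := h1.symm
    simpa using h2
  have hI1' : IntervalIntegrable (fun s => f (1/s)) volume (1/y) (1/x) := by
    rw [intervalIntegrable_iff_integrableOn_Icc_of_le hXY.le]
    exact hI1
  have hinth : IntervalIntegrable h volume (1/y) (1/x) := by
    rw [hh]
    exact (hI1'.add hI2').const_mul (1/2)
  obtain ⟨HL, HR⟩ := hh_pair hXY hconv hinth
  -- value of the integral of h
  have hsum : (∫ s in (1/y)..(1/x), h s) = (1/2) * ((∫ t in x..y, f t / t^2) +
      ∫ t in (a * b * y / ((a + b) * y - a * b))..(a * b * x / ((a + b) * x - a * b)),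
        f t / t^2) := by
    have e0 : (∫ s in (1/y)..(1/x), h s) =
        (1/2) * ((∫ s in (1/y)..(1/x), f (1/s)) +
          ∫ s in (1/y)..(1/x), f (1/((1/a + 1/b) - s))) := by
      rw [hh, ← intervalIntegral.integral_add hI1' hI2',
        ← intervalIntegral.integral_const_mul]
    rw [e0, hE1, hE2, hrefl]
  -- scaling constants
  have hyx0 : 0 < y - x := by linarith
  have hk : (1/x - 1/y) * (x*y/(y - x)) = 1 := by field_simp
  have hkpos : 0 < x*y/(y-x) := div_pos (by positivity) hyx0
  have hM : x*y/(2*(y-x)) * ((∫ t in x..y, f t / t^2) +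
      ∫ t in (a * b * y / ((a + b) * y - a * b))..(a * b * x / ((a + b) * x - a * b)),
        f t / t^2) = (∫ s in (1/y)..(1/x), h s) * (x*y/(y-x)) := by
    rw [hsum]
    field_simp
  have hden : 0 < 2*x*y*(a+b) - a*b*(x+y) := by
    nlinarith [mul_pos hx0 (D_pos ha hab hy.1), mul_pos hy0 (D_pos ha hab hx.1)]
  have hmid : (1/y + 1/x)/2 ≤ 1/a := by
    have h1 : 1/x ≤ 1/a := one_div_le_one_div_of_le ha hx.1
    have h2 : 1/y ≤ 1/x := hXY.le
    linarith
  have hcm : 0 < (1/a + 1/b) - (1/y + 1/x)/2 := by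
    have h2 : 0 < 1/b := by positivity
    linarith
  constructor
  · -- left inequality
    have e1 : 1/((1/y + 1/x)/2) = 2*x*y/(x+y) := by
      rw [div_eq_div_iff (ne_of_gt (by positivity : (0:ℝ) < (1/y + 1/x)/2))
        (ne_of_gt (by positivity : (0:ℝ) < x + y))]
      field_simp
    have e2 : 1/((1/a + 1/b) - (1/y + 1/x)/2) =
        2*a*b*x*y/(2*x*y*(a+b) - a*b*(x+y)) := by
      rw [div_eq_div_iff (ne_of_gt hcm) (ne_of_gt hden)]
      field_simp
      ring
    have hval : h ((1/y + 1/x)/2) = (1/2) * (f (2 * x * y / (x + y)) +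
        f (2 * a * b * x * y / (2 * x * y * (a + b) - a * b * (x + y)))) := by
      rw [hh]
      simp only
      rw [e1, e2]
    calc (1/2) * (f (2 * x * y / (x + y)) +
          f (2 * a * b * x * y / (2 * x * y * (a + b) - a * b * (x + y))))
        = h ((1/y + 1/x)/2) := hval.symm
      _ = ((1/x - 1/y) * h ((1/y + 1/x)/2)) * (x*y/(y-x)) := by
          rw [mul_comm (1/x - 1/y) _, mul_assoc, hk, mul_one]
      _ ≤ (∫ s in (1/y)..(1/x), h s) * (x*y/(y-x)) :=
          mul_le_mul_of_nonneg_right HL hkpos.le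
      _ = x*y/(2*(y-x)) * ((∫ t in x..y, f t / t^2) +
          ∫ t in (a * b * y / ((a + b) * y - a * b))..(a * b * x / ((a + b) * x - a * b)),
            f t / t^2) := hM.symm
  · -- right inequality
    have hvX : h (1/y) = (1/2) * (f y + f (a * b * y / ((a + b) * y - a * b))) := by
      rw [hh]
      simp only
      rw [one_div_one_div, ← hpeq]
    have hvY : h (1/x) = (1/2) * (f x + f (a * b * x / ((a + b) * x - a * b))) := by
      rw [hh]
      simp only
      rw [one_div_one_div, ← hqeq]
    calc x*y/(2*(y-x)) * ((∫ t in x..y, f t / t^2) +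
          ∫ t in (a * b * y / ((a + b) * y - a * b))..(a * b * x / ((a + b) * x - a * b)),
            f t / t^2)
        = (∫ s in (1/y)..(1/x), h s) * (x*y/(y-x)) := hM
      _ ≤ ((1/x - 1/y) * (h (1/y) + h (1/x)) / 2) * (x*y/(y-x)) :=
          mul_le_mul_of_nonneg_right HR hkpos.le
      _ = (h (1/y) + h (1/x)) / 2 * ((1/x - 1/y) * (x*y/(y-x))) := by ring
      _ = (h (1/y) + h (1/x)) / 2 := by rw [hk, mul_one]
      _ = (1/4) * (f x + f (a * b * x / ((a + b) * x - a * b)) + f y +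
          f (a * b * y / ((a + b) * y - a * b))) := by
          rw [hvX, hvY]; ring

/-- Hermite–Hadamard type inequalities on subintervals for symmetrized
harmonically convex functions. -/
theorem hermite_hadamard_subinterval (a b : ℝ) (f : ℝ → ℝ)
    (ha : 0 < a) (hab : a < b)
    (hshc : ∀ x ∈ Set.Icc a b, ∀ y ∈ Set.Icc a b, ∀ l ∈ Set.Icc (0:ℝ) 1,
      symTransform a b f (x * y / (l * x + (1 - l) * y)) ≤
        (1 - l) * symTransform a b f x + l * symTransform a b f y)
    (hint : IntervalIntegrable f MeasureTheory.volume a b) :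
    ∀ x ∈ Set.Icc a b, ∀ y ∈ Set.Icc a b, x ≠ y →
      (1/2) * (f (2 * x * y / (x + y)) +
          f (2 * a * b * x * y / (2 * x * y * (a + b) - a * b * (x + y)))) ≤
        x * y / (2 * (y - x)) *
          ((∫ t in x..y, f t / t ^ 2) +
            ∫ t in (a * b * y / ((a + b) * y - a * b))..(a * b * x / ((a + b) * x - a * b)),
              f t / t ^ 2) ∧
      x * y / (2 * (y - x)) *
          ((∫ t in x..y, f t / t ^ 2) +
            ∫ t in (a * b * y / ((a + b) * y - a * b))..(a * b * x / ((a + b) * x - a * b)),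
              f t / t ^ 2) ≤
        (1/4) * (f x + f (a * b * x / ((a + b) * x - a * b)) + f y +
          f (a * b * y / ((a + b) * y - a * b))) := by
  intro x hx y hy hxy
  rcases hxy.lt_or_gt with hlt | hlt
  · exact core_lt a b f ha hab hshc hint x hx y hy hlt
  · obtain ⟨L, R⟩ := core_lt a b f ha hab hshc hint y hy x hx hlt
    have e1 : 2 * y * x / (y + x) = 2 * x * y / (x + y) := by ring
    have e2 : 2 * a * b * y * x / (2 * y * x * (a + b) - a * b * (y + x))
        = 2 * a * b * x * y / (2 * x * y * (a + b) - a * b * (x + y)) := by ring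
    have emid : y * x / (2 * (x - y)) *
        ((∫ t in y..x, f t / t ^ 2) +
          ∫ t in (a * b * x / ((a + b) * x - a * b))..(a * b * y / ((a + b) * y - a * b)),
            f t / t ^ 2)
        = x * y / (2 * (y - x)) *
        ((∫ t in x..y, f t / t ^ 2) +
          ∫ t in (a * b * y / ((a + b) * y - a * b))..(a * b * x / ((a + b) * x - a * b)),
            f t / t ^ 2) := by
      rw [intervalIntegral.integral_symm x y, intervalIntegral.integral_symm
        (a * b * y / ((a + b) * y - a * b)) (a * b * x / ((a + b) * x - a * b)),
        show (2 * (x - y) : ℝ) = -(2 * (y - x)) by ring, div_neg]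
      ring
    rw [e1, e2, emid] at L
    rw [emid] at R
    refine ⟨L, ?_⟩
    have e3 : (1/4) * (f y + f (a * b * y / ((a + b) * y - a * b)) + f x +
        f (a * b * x / ((a + b) * x - a * b)))
        = (1/4) * (f x + f (a * b * x / ((a + b) * x - a * b)) + f y +
        f (a * b * y / ((a + b) * y - a * b))) := by ring
    rw [e3] at R
    exact R
end

section
/- If f : [a,b] → ℝ (0 < a < b) is harmonically convex, then for any x, y ∈ [a,b] with x ≠ y: f(2ab/(a+b)) ≤ (1/2)[f(2xy/(x+y)) + f(2abxy/(2xy(a+b) - ab(x+y)))]. -/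
/-- For a harmonically convex `f` on `[a,b]`, the value at the global harmonic
midpoint is bounded by means over the symmetric pair of harmonic midpoints. -/
theorem harmonic_convex_midpoint_bound (a b : ℝ) (f : ℝ → ℝ)
    (ha : 0 < a) (hab : a < b)
    (hf : ∀ x ∈ Set.Icc a b, ∀ y ∈ Set.Icc a b, ∀ l ∈ Set.Icc (0:ℝ) 1,
      f (x * y / (l * x + (1 - l) * y)) ≤ (1 - l) * f x + l * f y) :
    ∀ x ∈ Set.Icc a b, ∀ y ∈ Set.Icc a b, x ≠ y →
      f (2 * a * b / (a + b)) ≤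
        (1/2) * (f (2 * x * y / (x + y)) +
          f (2 * a * b * x * y / (2 * x * y * (a + b) - a * b * (x + y)))) := by
  intro x hx y hy _
  obtain ⟨hax, hxb⟩ := hx
  obtain ⟨hay, hyb⟩ := hy
  have hx0 : 0 < x := ha.trans_le hax
  have hy0 : 0 < y := ha.trans_le hay
  have hb : 0 < b := ha.trans hab
  have hxy0 : 0 < x + y := by linarith
  have h1 : a * (x + y) ≤ 2 * x * y := by nlinarith
  have h2 : 2 * x * y ≤ b * (x + y) := by nlinarith
  have hD : 0 < 2 * x * y * (a + b) - a * b * (x + y) := by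
    nlinarith [mul_le_mul_of_nonneg_left h1 hb.le, mul_pos (mul_pos hx0 hy0) ha]
  set u := 2 * x * y / (x + y) with hu_def
  set v := 2 * a * b * x * y / (2 * x * y * (a + b) - a * b * (x + y)) with hv_def
  have hu : u ∈ Set.Icc a b :=
    ⟨by rw [hu_def, le_div_iff₀ hxy0]; linarith,
     by rw [hu_def, div_le_iff₀ hxy0]; linarith⟩
  have hv : v ∈ Set.Icc a b := by
    constructor
    · rw [hv_def, le_div_iff₀ hD]
      nlinarith [mul_le_mul_of_nonneg_left h2 (mul_pos ha ha).le]
    · rw [hv_def, div_le_iff₀ hD]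
      nlinarith [mul_le_mul_of_nonneg_left h1 (mul_pos hb hb).le]
  have key := hf u hu v hv (1/2) (by norm_num)
  have hu0 : 0 < u := lt_of_lt_of_le ha hu.1
  have hv0 : 0 < v := lt_of_lt_of_le ha hv.1
  have heq : u * v / ((1/2 : ℝ) * u + (1 - 1/2) * v) = 2 * a * b / (a + b) := by
    have hden : (0:ℝ) < 1/2 * u + (1 - 1/2) * v := by linarith
    rw [div_eq_div_iff hden.ne' (by linarith : (0:ℝ) < a + b).ne', hu_def, hv_def]
    generalize hDD : 2 * x * y * (a + b) - a * b * (x + y) = D at hD ⊢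
    field_simp [hD.ne']
    rw [← hDD]
    ring
  rw [heq] at key
  linarith [key]
end

section
/- Let 0 < a < b, let g : [a,b] → ℝ be harmonically convex and f : [a,b] → ℝ be symmetrized harmonically convex, both integrable on [a,b]. Then ((f(a)+f(b))/2)·(ab/(b-a))∫_a^b g(t)/t² dt + ((g(a)+g(b))/2)·(ab/(b-a))∫_a^b f(t)/t² dt − ((f(a)+f(b))/2)·((g(a)+g(b))/2) ≤ (ab/(b-a)) ∫_a^b f̆(t) g(t)/t² dt, where f̆(t) = (1/2)[f(t) + f(abt/((a+b)t - ab))]. -/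
open intervalIntegral MeasureTheory

namespace PIL

noncomputable def tau (a b t : ℝ) : ℝ := a * b * t / ((a + b) * t - a * b)

variable {a b : ℝ}

lemma den_pos (ha : 0 < a) (hab : a < b) {t : ℝ} (ht : t ∈ Set.Icc a b) :
    0 < (a + b) * t - a * b := by
  nlinarith [ht.1, ht.2]

lemma tau_mem (ha : 0 < a) (hab : a < b) {t : ℝ} (ht : t ∈ Set.Icc a b) :
    tau a b t ∈ Set.Icc a b := by
  have hd := den_pos ha hab ht
  constructor
  · rw [tau, le_div_iff₀ hd]
    nlinarith [mul_nonneg (mul_pos ha ha).le (sub_nonneg.2 ht.2)]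
  · rw [tau, div_le_iff₀ hd]
    nlinarith [mul_nonneg (mul_pos (ha.trans hab) (ha.trans hab)).le (sub_nonneg.2 ht.1)]

lemma tau_invol (ha : 0 < a) (hab : a < b) {t : ℝ} (ht : t ∈ Set.Icc a b) :
    tau a b (tau a b t) = t := by
  have hd := den_pos ha hab ht
  have ht0 : 0 < t := lt_of_lt_of_le ha ht.1
  have hb : 0 < b := ha.trans hab
  have key : (a + b) * (a * b * t / ((a + b) * t - a * b)) - a * b
      = a * b * (a * b) / ((a + b) * t - a * b) := by
    field_simp
    ring
  show a * b * (a * b * t / ((a + b) * t - a * b)) /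
      ((a + b) * (a * b * t / ((a + b) * t - a * b)) - a * b) = t
  have h3 : a * b * (a * b) / ((a + b) * t - a * b) ≠ 0 := by positivity
  rw [key, div_eq_iff h3]
  field_simp

lemma tau_injOn (ha : 0 < a) (hab : a < b) : Set.InjOn (tau a b) (Set.Icc a b) :=
  fun x hx y hy h => by rw [← tau_invol ha hab hx, ← tau_invol ha hab hy, h]

lemma tau_image (ha : 0 < a) (hab : a < b) :
    tau a b '' Set.Icc a b = Set.Icc a b := by
  apply Set.Subset.antisymm
  · rintro y ⟨x, hx, rfl⟩; exact tau_mem ha hab hx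
  · intro x hx
    exact ⟨tau a b x, tau_mem ha hab hx, tau_invol ha hab hx⟩

lemma tau_deriv (ha : 0 < a) (hab : a < b) {t : ℝ} (ht : t ∈ Set.Icc a b) :
    HasDerivWithinAt (tau a b) (-(a^2*b^2) / ((a + b) * t - a * b)^2) (Set.Icc a b) t := by
  have hd := den_pos ha hab ht
  have h1 : HasDerivAt (fun t : ℝ => a * b * t) (a * b) t := by
    simpa using (hasDerivAt_id t).const_mul (a * b)
  have h2 : HasDerivAt (fun t : ℝ => (a + b) * t - a * b) (a + b) t := by
    simpa using ((hasDerivAt_id t).const_mul (a + b)).sub_const (a * b)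
  have h3 : HasDerivAt (tau a b) _ t := h1.div h2 hd.ne'
  refine (h3.congr_deriv ?_).hasDerivWithinAt
  ring

lemma refl_integral (ha : 0 < a) (hab : a < b) (h : ℝ → ℝ) :
    ∫ x in Set.Icc a b, h (tau a b x) / x ^ 2 = ∫ x in Set.Icc a b, h x / x ^ 2 := by
  have := MeasureTheory.integral_image_eq_integral_abs_deriv_smul measurableSet_Icc
    (fun x hx => tau_deriv ha hab hx) (tau_injOn ha hab) (fun x => h x / x ^ 2)
  rw [tau_image ha hab] at this
  rw [this]
  apply MeasureTheory.setIntegral_congr_fun measurableSet_Icc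
  intro x hx
  have hd := den_pos ha hab hx
  have hx0 : 0 < x := lt_of_lt_of_le ha hx.1
  have hb : 0 < b := ha.trans hab
  have habs : |(-(a^2*b^2) / ((a + b) * x - a * b)^2)| = (a^2*b^2) / ((a + b) * x - a * b)^2 := by
    rw [abs_div, abs_neg, abs_of_nonneg (by positivity), abs_of_nonneg (by positivity)]
  simp only [smul_eq_mul, habs, tau]
  rw [div_pow]
  have hd' : x * (a + b) - a * b ≠ 0 := by linarith
  field_simp

lemma refl_integrable (ha : 0 < a) (hab : a < b) {h : ℝ → ℝ}
    (hh : MeasureTheory.IntegrableOn (fun x => h x / x ^ 2) (Set.Icc a b)) :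
    MeasureTheory.IntegrableOn (fun x => h (tau a b x) / x ^ 2) (Set.Icc a b) := by
  have := (MeasureTheory.integrableOn_image_iff_integrableOn_abs_deriv_smul measurableSet_Icc
    (fun x hx => tau_deriv ha hab hx) (tau_injOn ha hab) (fun x => h x / x ^ 2))
  rw [tau_image ha hab] at this
  apply (this.1 hh).congr_fun _ measurableSet_Icc
  intro x hx
  have hd := den_pos ha hab hx
  have hx0 : 0 < x := lt_of_lt_of_le ha hx.1
  have hb : 0 < b := ha.trans hab
  have habs : |(-(a^2*b^2) / ((a + b) * x - a * b)^2)| = (a^2*b^2) / ((a + b) * x - a * b)^2 := by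
    rw [abs_div, abs_neg, abs_of_nonneg (by positivity), abs_of_nonneg (by positivity)]
  simp only [smul_eq_mul, habs, tau]
  rw [div_pow]
  field_simp

end PIL

/-- Lower product inequality for a harmonically convex `g` and a symmetrized
harmonically convex `f`. -/
theorem product_inequality_lower (a b : ℝ) (f g : ℝ → ℝ)
    (ha : 0 < a) (hab : a < b)
    (hg : ∀ x ∈ Set.Icc a b, ∀ y ∈ Set.Icc a b, ∀ l ∈ Set.Icc (0:ℝ) 1,
      g (x * y / (l * x + (1 - l) * y)) ≤ (1 - l) * g x + l * g y)
    (hshc : ∀ x ∈ Set.Icc a b, ∀ y ∈ Set.Icc a b, ∀ l ∈ Set.Icc (0:ℝ) 1,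
      symTransform a b f (x * y / (l * x + (1 - l) * y)) ≤
        (1 - l) * symTransform a b f x + l * symTransform a b f y)
    (hfint : IntervalIntegrable f MeasureTheory.volume a b)
    (hgint : IntervalIntegrable g MeasureTheory.volume a b)
    (hprodint : IntervalIntegrable (fun t => symTransform a b f t * g t / t ^ 2)
      MeasureTheory.volume a b) :
    (f a + f b) / 2 * (a * b / (b - a) * ∫ t in a..b, g t / t ^ 2) +
        (g a + g b) / 2 * (a * b / (b - a) * ∫ t in a..b, f t / t ^ 2) -
        (f a + f b) / 2 * ((g a + g b) / 2) ≤
      a * b / (b - a) * ∫ t in a..b, symTransform a b f t * g t / t ^ 2 := by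
  have hb : 0 < b := ha.trans hab
  have hba : 0 < b - a := sub_pos.2 hab
  set S := Set.Icc a b with hS
  set A := (f a + f b) / 2 with hA
  set G := (g a + g b) / 2 with hG
  have hmemA : a ∈ S := ⟨le_refl a, hab.le⟩
  have hmemB : b ∈ S := ⟨hab.le, le_refl b⟩
  -- values of the symmetric transform at the endpoints
  have hFa : symTransform a b f a = A := by
    have e : a * b * a / ((a + b) * a - a * b) = b := by
      rw [div_eq_iff (by nlinarith)]; ring
    rw [symTransform, e, hA]; ring
  have hFb : symTransform a b f b = A := by
    have e : a * b * b / ((a + b) * b - a * b) = a := by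
      rw [div_eq_iff (by nlinarith)]; ring
    rw [symTransform, e, hA]; ring
  -- pointwise inequality
  have key : ∀ t ∈ S,
      A/2 * (g t / t^2) + A/2 * (g (PIL.tau a b t) / t^2)
        + G * (symTransform a b f t / t^2) - A * G * (t^2)⁻¹ ≤
      (1/2) * (symTransform a b f t * g t / t^2)
        + (1/2) * (symTransform a b f (PIL.tau a b t) * g (PIL.tau a b t) / t^2) := by
    intro t ht
    have ht0 : 0 < t := lt_of_lt_of_le ha ht.1
    have ht2 : (0:ℝ) < t^2 := by positivity
    set l := b * (t - a) / (t * (b - a)) with hl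
    have hl0 : 0 ≤ l := div_nonneg (mul_nonneg hb.le (sub_nonneg.2 ht.1))
      (mul_nonneg ht0.le hba.le)
    have hl1 : l ≤ 1 := by
      rw [hl, div_le_one (by positivity)]
      nlinarith [mul_le_mul_of_nonneg_left ht.2 ha.le]
    have hlI : l ∈ Set.Icc (0:ℝ) 1 := ⟨hl0, hl1⟩
    have hlI' : (1 - l) ∈ Set.Icc (0:ℝ) 1 := ⟨by linarith, by linarith⟩
    have hden1 : l * a + (1 - l) * b = a * b / t := by
      rw [hl]; field_simp; ring
    have harg1 : a * b / (l * a + (1 - l) * b) = t := by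
      rw [hden1, div_div_eq_mul_div, mul_comm (a*b) t, mul_div_assoc,
        div_self (by positivity : a * b ≠ 0), mul_one]
    have hden2 : (1 - l) * a + (1 - (1 - l)) * b = ((a + b) * t - a * b) / t := by
      rw [hl]; field_simp; ring
    have harg2 : a * b / ((1 - l) * a + (1 - (1 - l)) * b) = PIL.tau a b t := by
      rw [hden2, PIL.tau, div_div_eq_mul_div]
    have hF : symTransform a b f t ≤ A := by
      have h := hshc a hmemA b hmemB l hlI
      rw [harg1, hFa, hFb] at h
      have e : (1 - l) * A + l * A = A := by ring
      linarith
    have hg1 : g t ≤ (1 - l) * g a + l * g b := by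
      have h := hg a hmemA b hmemB l hlI
      rwa [harg1] at h
    have hg2t : g (PIL.tau a b t) ≤ l * g a + (1 - l) * g b := by
      have h := hg a hmemA b hmemB (1 - l) hlI'
      rw [harg2] at h
      have e : (1 - (1 - l)) * g a + (1 - l) * g b = l * g a + (1 - l) * g b := by ring
      linarith
    have hi : PIL.tau a b (PIL.tau a b t) = t := PIL.tau_invol ha hab ht
    have hi' : a * b * PIL.tau a b t / ((a + b) * PIL.tau a b t - a * b) = t := hi
    have hFtau : symTransform a b f (PIL.tau a b t) = symTransform a b f t := by
      rw [symTransform, symTransform, hi',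
        show a * b * t / ((a + b) * t - a * b) = PIL.tau a b t from rfl]
      ring
    have ineq0 : A/2 * g t + A/2 * g (PIL.tau a b t) + G * symTransform a b f t - A * G ≤
        (1/2) * (symTransform a b f t * g t)
          + (1/2) * (symTransform a b f (PIL.tau a b t) * g (PIL.tau a b t)) := by
      rw [hFtau]
      nlinarith [mul_nonneg (sub_nonneg.2 hF)
        (by linarith : (0:ℝ) ≤ g a + g b - g t - g (PIL.tau a b t)), hG]
    have lhs_eq : A/2 * (g t / t^2) + A/2 * (g (PIL.tau a b t) / t^2)
        + G * (symTransform a b f t / t^2) - A * G * (t^2)⁻¹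
        = (A/2 * g t + A/2 * g (PIL.tau a b t) + G * symTransform a b f t - A * G) / t^2 := by
      ring
    have rhs_eq : (1/2) * (symTransform a b f t * g t / t^2)
        + (1/2) * (symTransform a b f (PIL.tau a b t) * g (PIL.tau a b t) / t^2)
        = ((1/2) * (symTransform a b f t * g t)
          + (1/2) * (symTransform a b f (PIL.tau a b t) * g (PIL.tau a b t))) / t^2 := by
      ring
    rw [lhs_eq, rhs_eq]
    exact div_le_div_of_nonneg_right ineq0 ht2.le
  -- integrability facts
  have hcont_inv : ContinuousOn (fun t : ℝ => (t^2)⁻¹) S :=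
    ContinuousOn.inv₀ ((continuous_pow 2).continuousOn)
      (fun x hx => pow_ne_zero 2 (lt_of_lt_of_le ha hx.1).ne')
  have hgS : IntegrableOn g S := by
    rw [hS, integrableOn_Icc_iff_integrableOn_Ioc]
    exact (intervalIntegrable_iff_integrableOn_Ioc_of_le hab.le).1 hgint
  have hfS : IntegrableOn f S := by
    rw [hS, integrableOn_Icc_iff_integrableOn_Ioc]
    exact (intervalIntegrable_iff_integrableOn_Ioc_of_le hab.le).1 hfint
  have hg2 : IntegrableOn (fun t => g t / t^2) S := by
    simpa [div_eq_mul_inv] using hgS.mul_continuousOn hcont_inv isCompact_Icc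
  have hf2 : IntegrableOn (fun t => f t / t^2) S := by
    simpa [div_eq_mul_inv] using hfS.mul_continuousOn hcont_inv isCompact_Icc
  have hp2 : IntegrableOn (fun t => symTransform a b f t * g t / t^2) S := by
    rw [hS, integrableOn_Icc_iff_integrableOn_Ioc]
    exact (intervalIntegrable_iff_integrableOn_Ioc_of_le hab.le).1 hprodint
  have hg2t : IntegrableOn (fun t => g (PIL.tau a b t) / t^2) S :=
    PIL.refl_integrable ha hab hg2
  have hf2t : IntegrableOn (fun t => f (PIL.tau a b t) / t^2) S :=
    PIL.refl_integrable ha hab hf2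
  have hp2t : IntegrableOn
      (fun t => symTransform a b f (PIL.tau a b t) * g (PIL.tau a b t) / t^2) S :=
    PIL.refl_integrable ha hab (h := fun x => symTransform a b f x * g x) hp2
  have hinv2 : IntegrableOn (fun t : ℝ => (t^2)⁻¹) S :=
    hcont_inv.integrableOn_compact isCompact_Icc
  have hFdiv_eq : (fun t => symTransform a b f t / t^2)
      = (fun t => (1/2) * (f t / t^2) + (1/2) * (f (PIL.tau a b t) / t^2)) := by
    funext t
    simp only [symTransform, PIL.tau]
    ring
  have hFdiv : IntegrableOn (fun t => symTransform a b f t / t^2) S := by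
    rw [hFdiv_eq]
    exact (hf2.const_mul _).add (hf2t.const_mul _)
  have hLHSint : IntegrableOn (fun t => A/2 * (g t / t^2) + A/2 * (g (PIL.tau a b t) / t^2)
      + G * (symTransform a b f t / t^2) - A * G * (t^2)⁻¹) S :=
    (((hg2.const_mul _).add (hg2t.const_mul _)).add (hFdiv.const_mul _)).sub
      (hinv2.const_mul _)
  have hRHSint : IntegrableOn (fun t => (1/2) * (symTransform a b f t * g t / t^2)
      + (1/2) * (symTransform a b f (PIL.tau a b t) * g (PIL.tau a b t) / t^2)) S :=
    (hp2.const_mul _).add (hp2t.const_mul _)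
  have hg2c : IntegrableOn (fun t => A/2 * (g t / t^2)) S := by exact hg2.const_mul _
  have hg2tc : IntegrableOn (fun t => A/2 * (g (PIL.tau a b t) / t^2)) S := by
    exact hg2t.const_mul _
  have hGF : IntegrableOn (fun t => G * (symTransform a b f t / t^2)) S := by
    exact hFdiv.const_mul _
  have hsum1 : IntegrableOn (fun t => A/2 * (g t / t^2) + A/2 * (g (PIL.tau a b t) / t^2)) S := by
    exact hg2c.add hg2tc
  have hsum2 : IntegrableOn (fun t => A/2 * (g t / t^2) + A/2 * (g (PIL.tau a b t) / t^2)
      + G * (symTransform a b f t / t^2)) S := by exact hsum1.add hGF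
  have hAG : IntegrableOn (fun t : ℝ => A * G * (t^2)⁻¹) S := by exact hinv2.const_mul _
  have hhalf1 : IntegrableOn (fun t => (1/2) * (symTransform a b f t * g t / t^2)) S := by
    exact hp2.const_mul _
  have hhalf2 : IntegrableOn
      (fun t => (1/2) * (symTransform a b f (PIL.tau a b t) * g (PIL.tau a b t) / t^2)) S := by
    exact hp2t.const_mul _
  have hfc1 : IntegrableOn (fun t => (1/2) * (f t / t^2)) S := by exact hf2.const_mul _
  have hfc2 : IntegrableOn (fun t => (1/2) * (f (PIL.tau a b t) / t^2)) S := by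
    exact hf2t.const_mul _
  have hmono := MeasureTheory.setIntegral_mono_on hLHSint hRHSint measurableSet_Icc key
  -- integral identities
  have e1 : ∫ t in S, g (PIL.tau a b t) / t^2 = ∫ t in S, g t / t^2 :=
    PIL.refl_integral ha hab g
  have e2 : ∫ t in S, f (PIL.tau a b t) / t^2 = ∫ t in S, f t / t^2 :=
    PIL.refl_integral ha hab f
  have e3 : ∫ t in S, symTransform a b f (PIL.tau a b t) * g (PIL.tau a b t) / t^2
      = ∫ t in S, symTransform a b f t * g t / t^2 :=
    PIL.refl_integral ha hab (fun x => symTransform a b f x * g x)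
  have eF : ∫ t in S, symTransform a b f t / t^2 = ∫ t in S, f t / t^2 := by
    rw [hFdiv_eq, MeasureTheory.integral_add hfc1 hfc2,
      MeasureTheory.integral_const_mul _ _, MeasureTheory.integral_const_mul _ _, e2]
    ring
  have einv : ∫ t in S, ((t:ℝ)^2)⁻¹ = (b - a)/(a*b) := by
    have h0 : (0:ℝ) ∉ Set.uIcc a b := by
      rw [Set.uIcc_of_le hab.le]
      intro h
      exact absurd h.1 (not_le.2 ha)
    have h1 := integral_zpow (a := a) (b := b) (n := (-2 : ℤ)) (Or.inr ⟨by norm_num, h0⟩)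
    have h2 : ∫ t in S, ((t:ℝ)^2)⁻¹ = ∫ t in a..b, (t:ℝ) ^ (-2 : ℤ) := by
      rw [intervalIntegral.integral_of_le hab.le, hS,
        MeasureTheory.integral_Icc_eq_integral_Ioc]
      simp_rw [show ∀ t : ℝ, t ^ (-2:ℤ) = (t^2)⁻¹ from fun t => by
        rw [zpow_neg, zpow_two, pow_two]]
    rw [h2, h1]
    norm_num
    field_simp
    ring
  -- compute both sides of hmono
  have EL : ∫ t in S, (A/2 * (g t / t^2) + A/2 * (g (PIL.tau a b t) / t^2)
      + G * (symTransform a b f t / t^2) - A * G * (t^2)⁻¹)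
      = A * (∫ t in S, g t / t^2) + G * (∫ t in S, f t / t^2) - A * G * ((b-a)/(a*b)) := by
    rw [MeasureTheory.integral_sub hsum2 hAG,
      MeasureTheory.integral_add hsum1 hGF,
      MeasureTheory.integral_add hg2c hg2tc,
      MeasureTheory.integral_const_mul _ _, MeasureTheory.integral_const_mul _ _,
      MeasureTheory.integral_const_mul _ _, MeasureTheory.integral_const_mul _ _, e1, eF, einv]
    ring
  have ER : ∫ t in S, ((1/2) * (symTransform a b f t * g t / t^2)
      + (1/2) * (symTransform a b f (PIL.tau a b t) * g (PIL.tau a b t) / t^2))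
      = ∫ t in S, symTransform a b f t * g t / t^2 := by
    rw [MeasureTheory.integral_add hhalf1 hhalf2,
      MeasureTheory.integral_const_mul _ _, MeasureTheory.integral_const_mul _ _, e3]
    ring
  rw [EL, ER] at hmono
  -- convert interval integrals in the goal to set integrals
  have c1 : ∫ t in a..b, g t / t^2 = ∫ t in S, g t / t^2 := by
    rw [intervalIntegral.integral_of_le hab.le, hS, MeasureTheory.integral_Icc_eq_integral_Ioc]
  have c2 : ∫ t in a..b, f t / t^2 = ∫ t in S, f t / t^2 := by
    rw [intervalIntegral.integral_of_le hab.le, hS, MeasureTheory.integral_Icc_eq_integral_Ioc]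
  have c3 : ∫ t in a..b, symTransform a b f t * g t / t^2
      = ∫ t in S, symTransform a b f t * g t / t^2 := by
    rw [intervalIntegral.integral_of_le hab.le, hS, MeasureTheory.integral_Icc_eq_integral_Ioc]
  rw [c1, c2, c3]
  set I1 := ∫ t in S, g t / t^2
  set I2 := ∫ t in S, f t / t^2
  set I3 := ∫ t in S, symTransform a b f t * g t / t^2
  have hmul := mul_le_mul_of_nonneg_left hmono (le_of_lt (by positivity : (0:ℝ) < a*b/(b-a)))
  have expand : a*b/(b-a) * (A * I1 + G * I2 - A * G * ((b-a)/(a*b)))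
      = A * (a*b/(b-a) * I1) + G * (a*b/(b-a) * I2) - A * G := by
    field_simp
  linarith [hmul, expand]
end

section
/- Let h : J → [0,∞) with (0,1) ⊆ J, h not identically 0, h(1/2) > 0. If f : [a,b] → [0,∞) (0 < a < b) is symmetrized harmonically h-convex, h integrable on [0,1], f integrable on [a,b], then (1/(2h(1/2))) f(2ab/(a+b)) ≤ (ab/(b-a)) ∫_a^b f(t)/t² dt ≤ [f(a)+f(b)] ∫_0^1 h(t) dt. -/
open intervalIntegral

namespace HHaux

open MeasureTheory Set

lemma D_pos {a b : ℝ} (ha : 0 < a) (hab : a < b) {l : ℝ} (hl : l ∈ Set.Icc (0:ℝ) 1) :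
    0 < l * a + (1 - l) * b := by
  rcases hl with ⟨h0, h1⟩
  nlinarith

lemma phi_mem {a b : ℝ} (ha : 0 < a) (hab : a < b) {l : ℝ} (hl : l ∈ Set.Ioo (0:ℝ) 1) :
    a * b / (l * a + (1 - l) * b) ∈ Set.Ioo a b := by
  rcases hl with ⟨h0, h1⟩
  have hb : 0 < b := ha.trans hab
  have hD : 0 < l * a + (1 - l) * b := D_pos ha hab ⟨h0.le, h1.le⟩
  constructor
  · rw [lt_div_iff₀ hD]
    nlinarith [mul_pos (mul_pos ha h0) (sub_pos.2 hab)]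
  · rw [div_lt_iff₀ hD]
    nlinarith [mul_pos (mul_pos hb (by linarith : (0:ℝ) < 1 - l)) (sub_pos.2 hab)]

lemma phi_image {a b : ℝ} (ha : 0 < a) (hab : a < b) :
    (fun l => a * b / (l * a + (1 - l) * b)) '' Set.Ioo (0:ℝ) 1 = Set.Ioo a b := by
  have hb : 0 < b := ha.trans hab
  ext t
  constructor
  · rintro ⟨l, hl, rfl⟩
    exact phi_mem ha hab hl
  · rintro ⟨h1, h2⟩
    have ht : 0 < t := ha.trans h1
    have hnum : 0 < b * (t - a) := mul_pos hb (by linarith)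
    have hden : 0 < t * (b - a) := mul_pos ht (by linarith)
    refine ⟨b * (t - a) / (t * (b - a)), ⟨div_pos hnum hden, ?_⟩, ?_⟩
    · rw [div_lt_one hden]; nlinarith
    · have hDval : (b * (t - a) / (t * (b - a))) * a +
          (1 - b * (t - a) / (t * (b - a))) * b = a * b / t := by
        have : b - a ≠ 0 := by linarith
        have := ht.ne'
        field_simp
        ring
      show a * b / (b * (t - a) / (t * (b - a)) * a + (1 - b * (t - a) / (t * (b - a))) * b) = t
      rw [hDval, div_div_eq_mul_div, mul_comm (a * b) t, mul_div_assoc,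
        div_self (by positivity : a * b ≠ 0), mul_one]

lemma phi_hasDeriv {a b : ℝ} (ha : 0 < a) (hab : a < b) {l : ℝ} (hl : l ∈ Set.Ioo (0:ℝ) 1) :
    HasDerivWithinAt (fun l => a * b / (l * a + (1 - l) * b))
      (a * b * (b - a) / (l * a + (1 - l) * b) ^ 2) (Set.Ioo (0:ℝ) 1) l := by
  have hD : 0 < l * a + (1 - l) * b := D_pos ha hab ⟨hl.1.le, hl.2.le⟩
  have h1 : HasDerivAt (fun l : ℝ => l * a + (1 - l) * b) (a - b) l := by
    have := ((hasDerivAt_id l).mul_const a).add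
      (((hasDerivAt_const l (1:ℝ)).sub (hasDerivAt_id l)).mul_const b)
    exact this.congr_deriv (by ring)
  have h2 := (h1.inv hD.ne').const_mul (a * b)
  have h3 : (fun y : ℝ => a * b / (y * a + (1 - y) * b)) =
      fun y => a * b * (y * a + (1 - y) * b)⁻¹ := by
    funext y; rw [div_eq_mul_inv]
  rw [h3]
  refine HasDerivAt.hasDerivWithinAt ?_
  exact h2.congr_deriv (by ring)

lemma phi_inj {a b : ℝ} (ha : 0 < a) (hab : a < b) :
    Set.InjOn (fun l => a * b / (l * a + (1 - l) * b)) (Set.Ioo (0:ℝ) 1) := by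
  intro l1 h1 l2 h2 heq
  have hb : 0 < b := ha.trans hab
  have hD1 : 0 < l1 * a + (1 - l1) * b := D_pos ha hab ⟨h1.1.le, h1.2.le⟩
  have hD2 : 0 < l2 * a + (1 - l2) * b := D_pos ha hab ⟨h2.1.le, h2.2.le⟩
  have hab0 : (0:ℝ) < a * b := by positivity
  simp only [div_eq_div_iff hD1.ne' hD2.ne'] at heq
  have h3 : (l1 - l2) * (a - b) = 0 := by nlinarith
  rcases mul_eq_zero.1 h3 with h | h
  · linarith [sub_eq_zero.1 h]
  · linarith [sub_eq_zero.1 h]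

lemma cov_integral {a b : ℝ} (ha : 0 < a) (hab : a < b) (g : ℝ → ℝ) :
    ∫ t in Set.Ioo a b, g t / t ^ 2 =
      (b - a) / (a * b) * ∫ l in Set.Ioo (0:ℝ) 1, g (a * b / (l * a + (1 - l) * b)) := by
  have hb := ha.trans hab
  rw [← phi_image ha hab,
    integral_image_eq_integral_abs_deriv_smul measurableSet_Ioo
      (fun l hl => phi_hasDeriv ha hab hl) (phi_inj ha hab), ← MeasureTheory.integral_const_mul]
  refine setIntegral_congr_fun measurableSet_Ioo fun l hl => ?_
  have hba : 0 < b - a := sub_pos.2 hab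
  have hD : 0 < l * a + (1 - l) * b := D_pos ha hab ⟨hl.1.le, hl.2.le⟩
  rw [smul_eq_mul, abs_of_pos (div_pos (by positivity) (by positivity))]
  have : a * l + b * (1 - l) ≠ 0 := by nlinarith
  field_simp

lemma cov_integrable {a b : ℝ} (ha : 0 < a) (hab : a < b) (g : ℝ → ℝ)
    (hg : IntegrableOn (fun t => g t / t ^ 2) (Set.Ioo a b)) :
    IntegrableOn (fun l => g (a * b / (l * a + (1 - l) * b))) (Set.Ioo (0:ℝ) 1) := by
  have hb := ha.trans hab
  rw [← phi_image ha hab,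
    integrableOn_image_iff_integrableOn_abs_deriv_smul measurableSet_Ioo
      (fun l hl => phi_hasDeriv ha hab hl) (phi_inj ha hab)] at hg
  have h2 := hg.const_mul (a * b / (b - a))
  refine MeasureTheory.IntegrableOn.congr_fun h2 (fun l hl => ?_) measurableSet_Ioo
  have hba : 0 < b - a := sub_pos.2 hab
  have hD : 0 < l * a + (1 - l) * b := D_pos ha hab ⟨hl.1.le, hl.2.le⟩
  rw [smul_eq_mul, abs_of_pos (div_pos (by positivity) (by positivity))]
  have : a * l + b * (1 - l) ≠ 0 := by nlinarith
  field_simp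

lemma sym_a {a b : ℝ} (f : ℝ → ℝ) (ha : 0 < a) (hab : a < b) :
    symTransform a b f a = 1/2 * (f a + f b) := by
  have h1 : a * b * a / ((a + b) * a - a * b) = b := by
    have h2 : (a + b) * a - a * b = a * a := by ring
    rw [h2]
    field_simp
  rw [symTransform, h1]

lemma sym_b {a b : ℝ} (f : ℝ → ℝ) (ha : 0 < a) (hab : a < b) :
    symTransform a b f b = 1/2 * (f b + f a) := by
  have hb : 0 < b := ha.trans hab
  have h1 : a * b * b / ((a + b) * b - a * b) = a := by
    have h2 : (a + b) * b - a * b = b * b := by ring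
    rw [h2]
    field_simp
  rw [symTransform, h1]

lemma sym_m {a b : ℝ} (f : ℝ → ℝ) (ha : 0 < a) (hab : a < b) :
    symTransform a b f (2 * a * b / (a + b)) = f (2 * a * b / (a + b)) := by
  have hb : 0 < b := ha.trans hab
  have hsum : 0 < a + b := by linarith
  have h1 : a * b * (2 * a * b / (a + b)) / ((a + b) * (2 * a * b / (a + b)) - a * b) =
      2 * a * b / (a + b) := by
    have h2 : (a + b) * (2 * a * b / (a + b)) - a * b = a * b := by
      field_simp
      ring
    rw [h2, mul_comm (a * b) (2 * a * b / (a + b)), mul_div_assoc,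
      div_self (by positivity : a * b ≠ 0), mul_one]
  rw [symTransform, h1]
  ring

lemma sym_phi {a b : ℝ} (f : ℝ → ℝ) (ha : 0 < a) (hab : a < b) {l : ℝ}
    (hl : l ∈ Set.Ioo (0:ℝ) 1) :
    symTransform a b f (a * b / (l * a + (1 - l) * b)) =
      1/2 * (f (a * b / (l * a + (1 - l) * b)) + f (a * b / ((1 - l) * a + l * b))) := by
  have hb : 0 < b := ha.trans hab
  have hd2 : 0 < l * a + (1 - l) * b := by nlinarith [hl.1, hl.2]
  have hd1 : 0 < (1 - l) * a + l * b := by nlinarith [hl.1, hl.2]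
  have h1 : a * b * (a * b / (l * a + (1 - l) * b)) /
      ((a + b) * (a * b / (l * a + (1 - l) * b)) - a * b) =
      a * b / ((1 - l) * a + l * b) := by
    have h2 : (a + b) * (a * b / (l * a + (1 - l) * b)) - a * b =
        a * b * ((1 - l) * a + l * b) / (l * a + (1 - l) * b) := by
      have : a * l + b * (1 - l) ≠ 0 := by nlinarith
      field_simp
      ring
    rw [h2, div_eq_div_iff (ne_of_gt (div_pos (mul_pos (mul_pos ha hb) hd1) hd2)) hd1.ne']
    field_simp
  rw [symTransform, h1]

end HHaux

open MeasureTheory in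
/-- Hermite–Hadamard type inequalities for symmetrized harmonically h-convex
functions. -/
theorem hermite_hadamard_h_convex (a b : ℝ) (f h : ℝ → ℝ)
    (ha : 0 < a) (hab : a < b)
    (hh0 : ∀ t ∈ Set.Ioo (0:ℝ) 1, 0 ≤ h t)
    (hhalf : 0 < h (1/2))
    (hhint : IntervalIntegrable h MeasureTheory.volume 0 1)
    (hf0 : ∀ x ∈ Set.Icc a b, 0 ≤ f x)
    (hfint : IntervalIntegrable f MeasureTheory.volume a b)
    (hshc : ∀ x ∈ Set.Icc a b, ∀ y ∈ Set.Icc a b, ∀ l ∈ Set.Ioo (0:ℝ) 1,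
      symTransform a b f (x * y / (l * x + (1 - l) * y)) ≤
        h l * symTransform a b f y + h (1 - l) * symTransform a b f x) :
    1 / (2 * h (1/2)) * f (2 * a * b / (a + b)) ≤
        a * b / (b - a) * ∫ t in a..b, f t / t ^ 2 ∧
      a * b / (b - a) * (∫ t in a..b, f t / t ^ 2) ≤
        (f a + f b) * ∫ t in (0:ℝ)..1, h t := by
  have hb : 0 < b := ha.trans hab
  have hba : 0 < b - a := sub_pos.2 hab
  have habp : 0 < a * b := mul_pos ha hb
  -- integrability of f t / t² on (a,b)
  have hg : IntegrableOn (fun t => f t / t ^ 2) (Set.Ioo a b) volume := by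
    have hcont : ContinuousOn (fun t : ℝ => (t ^ 2)⁻¹) (Set.uIcc a b) := by
      refine ContinuousOn.inv₀ (continuousOn_pow 2) fun t ht => ?_
      rw [Set.uIcc_of_le hab.le] at ht
      have h0 : 0 < t := lt_of_lt_of_le ha ht.1
      positivity
    have h1 : IntervalIntegrable (fun t => f t * (t ^ 2)⁻¹) volume a b :=
      hfint.mul_continuousOn hcont
    have h2 : IntervalIntegrable (fun t => f t / t ^ 2) volume a b := by
      simpa [div_eq_mul_inv] using h1
    exact (intervalIntegrable_iff_integrableOn_Ioo_of_le hab.le).1 h2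
  set I := ∫ l in Set.Ioo (0:ℝ) 1, f (a * b / (l * a + (1 - l) * b)) with hI
  have hval : (∫ t in a..b, f t / t ^ 2) = (b - a) / (a * b) * I := by
    rw [intervalIntegral.integral_of_le hab.le, MeasureTheory.integral_Ioc_eq_integral_Ioo,
      HHaux.cov_integral ha hab f]
  have hABJ : a * b / (b - a) * ∫ t in a..b, f t / t ^ 2 = I := by
    rw [hval]
    field_simp
  have hIphi : IntegrableOn (fun l => f (a * b / (l * a + (1 - l) * b)))
      (Set.Ioo (0:ℝ) 1) volume := HHaux.cov_integrable ha hab f hg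
  have hIint : IntervalIntegrable (fun l => f (a * b / (l * a + (1 - l) * b)))
      volume 0 1 :=
    (intervalIntegrable_iff_integrableOn_Ioo_of_le zero_le_one).2 hIphi
  have hIphi' : IntegrableOn (fun l => f (a * b / ((1 - l) * a + l * b)))
      (Set.Ioo (0:ℝ) 1) volume := by
    have h2 := (hIint.comp_sub_left 1).symm
    refine (intervalIntegrable_iff_integrableOn_Ioo_of_le zero_le_one).1 ?_
    simpa [sub_sub_cancel] using h2
  have hrefl : (∫ l in Set.Ioo (0:ℝ) 1, f (a * b / ((1 - l) * a + l * b))) = I := by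
    have h1 : (∫ x in (0:ℝ)..1, f (a * b / ((1 - x) * a + x * b)))
        = ∫ x in (0:ℝ)..1, f (a * b / (x * a + (1 - x) * b)) := by
      have := intervalIntegral.integral_comp_sub_left (a := 0) (b := 1)
        (fun l => f (a * b / (l * a + (1 - l) * b))) 1
      simpa [sub_sub_cancel] using this
    rw [hI, ← MeasureTheory.integral_Ioc_eq_integral_Ioo,
      ← intervalIntegral.integral_of_le zero_le_one, h1,
      intervalIntegral.integral_of_le zero_le_one, MeasureTheory.integral_Ioc_eq_integral_Ioo]
  have hhIoo : IntegrableOn h (Set.Ioo (0:ℝ) 1) volume :=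
    (intervalIntegrable_iff_integrableOn_Ioo_of_le zero_le_one).1 hhint
  have hhIoo' : IntegrableOn (fun l => h (1 - l)) (Set.Ioo (0:ℝ) 1) volume := by
    have h2 := (hhint.comp_sub_left 1).symm
    refine (intervalIntegrable_iff_integrableOn_Ioo_of_le zero_le_one).1 ?_
    simpa using h2
  have hhrefl : (∫ l in Set.Ioo (0:ℝ) 1, h (1 - l)) = ∫ l in Set.Ioo (0:ℝ) 1, h l := by
    have h1 : (∫ x in (0:ℝ)..1, h (1 - x)) = ∫ x in (0:ℝ)..1, h x := by
      have := intervalIntegral.integral_comp_sub_left (a := 0) (b := 1) h 1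
      simpa using this
    rw [← MeasureTheory.integral_Ioc_eq_integral_Ioo,
      ← intervalIntegral.integral_of_le zero_le_one, h1,
      intervalIntegral.integral_of_le zero_le_one, MeasureTheory.integral_Ioc_eq_integral_Ioo]
  have hmem : ∀ l ∈ Set.Ioo (0:ℝ) 1, a * b / (l * a + (1 - l) * b) ∈ Set.Icc a b :=
    fun l hl => Set.Ioo_subset_Icc_self (HHaux.phi_mem ha hab hl)
  have hmem' : ∀ l ∈ Set.Ioo (0:ℝ) 1, a * b / ((1 - l) * a + l * b) ∈ Set.Icc a b := by
    intro l hl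
    have h1 : (1 - l) ∈ Set.Ioo (0:ℝ) 1 := ⟨by linarith [hl.2], by linarith [hl.1]⟩
    have := hmem _ h1
    simpa [sub_sub_cancel] using this
  have hsymphi' : ∀ l ∈ Set.Ioo (0:ℝ) 1,
      symTransform a b f (a * b / ((1 - l) * a + l * b)) =
      1/2 * (f (a * b / ((1 - l) * a + l * b)) + f (a * b / (l * a + (1 - l) * b))) := by
    intro l hl
    have h1 : (1 - l) ∈ Set.Ioo (0:ℝ) 1 := ⟨by linarith [hl.2], by linarith [hl.1]⟩
    have := HHaux.sym_phi f ha hab h1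
    simpa [sub_sub_cancel] using this
  -- Left inequality
  have hlow : f (2 * a * b / (a + b)) ≤ 2 * h (1/2) * I := by
    have hmono : (∫ _ in Set.Ioo (0:ℝ) 1, f (2 * a * b / (a + b))) ≤
        ∫ l in Set.Ioo (0:ℝ) 1,
          h (1/2) * (f (a * b / (l * a + (1 - l) * b)) + f (a * b / ((1 - l) * a + l * b))) := by
      refine MeasureTheory.setIntegral_mono_on (MeasureTheory.integrableOn_const ?_)
        ((hIphi.add hIphi').const_mul _) measurableSet_Ioo ?_
      · rw [Real.volume_Ioo]
        exact ENNReal.ofReal_ne_top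
      · intro l hl
        have h12 : (1:ℝ)/2 ∈ Set.Ioo (0:ℝ) 1 := by norm_num
        have key := hshc _ (hmem' l hl) _ (hmem l hl) (1/2) h12
        have e1 : (1:ℝ) - 1/2 = 1/2 := by norm_num
        rw [e1] at key
        have hd2 : 0 < l * a + (1 - l) * b := HHaux.D_pos ha hab ⟨hl.1.le, hl.2.le⟩
        have hd1 : 0 < (1 - l) * a + l * b := by nlinarith [hl.1, hl.2]
        have harg : a * b / ((1 - l) * a + l * b) * (a * b / (l * a + (1 - l) * b)) /
            (1/2 * (a * b / ((1 - l) * a + l * b)) + 1/2 * (a * b / (l * a + (1 - l) * b)))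
            = 2 * a * b / (a + b) := by
          have hden : 1/2 * (a * b / ((1 - l) * a + l * b)) +
              1/2 * (a * b / (l * a + (1 - l) * b)) =
              a * b * (a + b) / (2 * (((1 - l) * a + l * b) * (l * a + (1 - l) * b))) := by
            have : a * l + b * (1 - l) ≠ 0 := by nlinarith
            have : a * (1 - l) + b * l ≠ 0 := by nlinarith
            field_simp
            ring
          rw [hden, div_eq_div_iff
            (ne_of_gt (div_pos (by positivity) (mul_pos zero_lt_two (mul_pos hd1 hd2))))
            (by positivity : (a + b) ≠ 0)]
          field_simp
        rw [harg, HHaux.sym_m f ha hab, HHaux.sym_phi f ha hab hl, hsymphi' l hl] at key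
        linarith
    have hconst : (∫ _ in Set.Ioo (0:ℝ) 1, f (2 * a * b / (a + b))) =
        f (2 * a * b / (a + b)) := by
      simp [MeasureTheory.setIntegral_const, Real.volume_Ioo]
    have hrhs : (∫ l in Set.Ioo (0:ℝ) 1,
        h (1/2) * (f (a * b / (l * a + (1 - l) * b)) + f (a * b / ((1 - l) * a + l * b))))
        = 2 * h (1/2) * I := by
      rw [MeasureTheory.integral_const_mul, MeasureTheory.integral_add hIphi hIphi', hrefl]
      ring
    rw [hconst, hrhs] at hmono
    exact hmono
  -- Right inequality
  have hup : I ≤ (f a + f b) * ∫ l in Set.Ioo (0:ℝ) 1, h l := by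
    have hmono : (∫ l in Set.Ioo (0:ℝ) 1,
        1/2 * (f (a * b / (l * a + (1 - l) * b)) + f (a * b / ((1 - l) * a + l * b)))) ≤
        ∫ l in Set.Ioo (0:ℝ) 1, (h l + h (1 - l)) * (1/2 * (f a + f b)) := by
      refine MeasureTheory.setIntegral_mono_on ((hIphi.add hIphi').const_mul _)
        ((hhIoo.add hhIoo').mul_const _) measurableSet_Ioo ?_
      intro l hl
      have key := hshc a ⟨le_refl a, hab.le⟩ b ⟨hab.le, le_refl b⟩ l hl
      rw [HHaux.sym_a f ha hab, HHaux.sym_b f ha hab, HHaux.sym_phi f ha hab hl] at key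
      ring_nf at key ⊢
      linarith
    have hlhs : (∫ l in Set.Ioo (0:ℝ) 1,
        1/2 * (f (a * b / (l * a + (1 - l) * b)) + f (a * b / ((1 - l) * a + l * b)))) = I := by
      rw [MeasureTheory.integral_const_mul, MeasureTheory.integral_add hIphi hIphi', hrefl]
      ring
    have hrhs : (∫ l in Set.Ioo (0:ℝ) 1, (h l + h (1 - l)) * (1/2 * (f a + f b))) =
        (f a + f b) * ∫ l in Set.Ioo (0:ℝ) 1, h l := by
      rw [MeasureTheory.integral_mul_const, MeasureTheory.integral_add hhIoo hhIoo', hhrefl]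
      ring
    rw [hlhs, hrhs] at hmono
    exact hmono
  have hint01 : (∫ t in (0:ℝ)..1, h t) = ∫ l in Set.Ioo (0:ℝ) 1, h l := by
    rw [intervalIntegral.integral_of_le zero_le_one, MeasureTheory.integral_Ioc_eq_integral_Ioo]
  constructor
  · rw [hABJ, div_mul_eq_mul_div, one_mul, div_le_iff₀ (by linarith : (0:ℝ) < 2 * h (1/2))]
    calc f (2 * a * b / (a + b)) ≤ 2 * h (1/2) * I := hlow
      _ = I * (2 * h (1/2)) := by ring
  · rw [hABJ, hint01]
    exact hup
end

section
/- Let h : J → [0,∞) with (0,1) ⊆ J, h(1/2) > 0, h integrable on [0,1]. If f : [a,b] → [0,∞) (0 < a < b) is symmetrized harmonically h-convex and integrable on [a,b], then for any x, y ∈ [a,b] with x ≠ y: (1/(4h(1/2)))[f(2xy/(x+y)) + f(2abxy/(2xy(a+b) - ab(x+y)))] ≤ (xy/(2(y-x)))[∫_x^y f(t)/t² dt + ∫_{aby/((a+b)y-ab)}^{abx/((a+b)x-ab)} f(t)/t² dt] ≤ (1/2)[f(x) + f(abx/((a+b)x-ab)) + f(y) + f(aby/((a+b)y-ab))] ∫_0^1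 h(t) dt. -/
open intervalIntegral

section Helpers
open MeasureTheory Set intervalIntegral

lemma iooInt (g : ℝ → ℝ) : ∫ l in Ioo (0:ℝ) 1, g l = ∫ l in (0:ℝ)..1, g l := by
  rw [integral_of_le zero_le_one, integral_Ioc_eq_integral_Ioo]

lemma reflIoo (F : ℝ → ℝ) (hF : IntegrableOn F (Ioo (0:ℝ) 1)) :
    IntegrableOn (fun l => F (1 - l)) (Ioo (0:ℝ) 1) ∧
      ∫ l in Ioo (0:ℝ) 1, F (1 - l) = ∫ l in Ioo (0:ℝ) 1, F l := by
  have h1 : IntervalIntegrable F volume 0 1 :=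
    (intervalIntegrable_iff_integrableOn_Ioo_of_le zero_le_one).mpr hF
  have h2 := (h1.comp_sub_left 1).symm
  norm_num at h2
  constructor
  · exact (intervalIntegrable_iff_integrableOn_Ioo_of_le zero_le_one).mp h2
  · rw [iooInt, iooInt F, integral_comp_sub_left F 1]
    norm_num

lemma Tmem {x y : ℝ} (hx : 0 < x) (hxy : x < y) {l : ℝ} (hl : l ∈ Ioo (0:ℝ) 1) :
    x * y / (l * x + (1 - l) * y) ∈ Ioo x y := by
  have hy : 0 < y := hx.trans hxy
  have d0 : 0 < l * x + (1 - l) * y := by nlinarith [hl.1, hl.2]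
  constructor
  · rw [lt_div_iff₀ d0]; nlinarith [mul_pos hx (mul_pos hl.1 (sub_pos.mpr hxy))]
  · rw [div_lt_iff₀ d0]; nlinarith [mul_pos hy (mul_pos (sub_pos.mpr hl.2) (sub_pos.mpr hxy))]


lemma cov_T {x y : ℝ} (hx : 0 < x) (hxy : x < y) (f : ℝ → ℝ)
    (hf : IntegrableOn (fun t => f t / t ^ 2) (Ioo x y)) :
    ((∫ t in x..y, f t / t ^ 2) =
        (y - x) / (x * y) * ∫ l in Ioo (0:ℝ) 1, f (x * y / (l * x + (1 - l) * y))) ∧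
      IntegrableOn (fun l => f (x * y / (l * x + (1 - l) * y))) (Ioo (0:ℝ) 1) := by
  have hy : 0 < y := hx.trans hxy
  have hd : ∀ l ∈ Ioo (0:ℝ) 1, 0 < l * x + (1 - l) * y := by
    intro l hl; nlinarith [hl.1, hl.2]
  set T : ℝ → ℝ := fun l => x * y / (l * x + (1 - l) * y) with hT
  have hderiv : ∀ l ∈ Ioo (0:ℝ) 1,
      HasDerivWithinAt T (x * y * (y - x) / (l * x + (1 - l) * y) ^ 2) (Ioo 0 1) l := by
    intro l hl
    have h0 := (hd l hl).ne'
    have hden : HasDerivAt (fun l : ℝ => l * x + (1 - l) * y) (x - y) l := by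
      have := ((hasDerivAt_id l).mul_const x).add
        (((hasDerivAt_const l (1:ℝ)).sub (hasDerivAt_id l)).mul_const y)
      exact this.congr_deriv (by ring)
    have := (hasDerivAt_const l (x * y)).div hden h0
    refine HasDerivAt.hasDerivWithinAt ?_
    exact this.congr_deriv (by ring)
  have hinj : InjOn T (Ioo 0 1) := by
    intro l1 h1 l2 h2 he
    have d1 := hd l1 h1; have d2 := hd l2 h2
    simp only [hT] at he
    rw [div_eq_div_iff d1.ne' d2.ne'] at he
    have : x * y * (l2 - l1) * (x - y) = 0 := by linear_combination he
    have hxy0 : x * y ≠ 0 := by positivity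
    have := mul_eq_zero.mp this
    rcases this with h | h
    · rcases mul_eq_zero.mp h with h | h
      · exact absurd h hxy0
      · linarith
    · nlinarith
  have hTmem : ∀ l ∈ Ioo (0:ℝ) 1, T l ∈ Ioo x y := by
    intro l hl
    have d0 := hd l hl
    constructor
    · rw [lt_div_iff₀ d0]
      nlinarith [mul_pos hx (mul_pos hl.1 (sub_pos.mpr hxy))]
    · rw [div_lt_iff₀ d0]
      nlinarith [mul_pos hy (mul_pos (sub_pos.mpr hl.2) (sub_pos.mpr hxy))]
  have himage : T '' Ioo 0 1 = Ioo x y := by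
    apply Subset.antisymm
    · rintro _ ⟨l, hl, rfl⟩; exact hTmem l hl
    · rintro z ⟨hz1, hz2⟩
      have hz0 : 0 < z := hx.trans hz1
      have hzx : (0:ℝ) < z - x := by linarith
      have hyx : (0:ℝ) < y - x := by linarith
      have hden : (0:ℝ) < z * (y - x) := by positivity
      refine ⟨y * (z - x) / (z * (y - x)), ⟨by positivity, ?_⟩, ?_⟩
      · rw [div_lt_one hden]; nlinarith [mul_pos hx (sub_pos.mpr hz2)]
      · show x * y / _ = z
        have hcomb : y * (z - x) / (z * (y - x)) * x + (1 - y * (z - x) / (z * (y - x))) * y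
            = x * y / z := by
          field_simp
          ring
        rw [hcomb]
        field_simp
  have hc0 : (0:ℝ) < (y - x) / (x * y) := div_pos (by linarith) (by positivity)
  have hEq : EqOn
      (fun l => |x * y * (y - x) / (l * x + (1 - l) * y) ^ 2| • (f (T l) / (T l) ^ 2))
      (fun l => (y - x) / (x * y) * f (T l)) (Ioo 0 1) := by
    intro l hl
    have d0 := hd l hl
    have habs : |x * y * (y - x) / (l * x + (1 - l) * y) ^ 2| =
        x * y * (y - x) / (l * x + (1 - l) * y) ^ 2 :=
      abs_of_pos (div_pos (mul_pos (mul_pos hx hy) (sub_pos.mpr hxy)) (by positivity))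
    simp only [smul_eq_mul, habs]
    show x * y * (y - x) / (l * x + (1 - l) * y) ^ 2 *
        (f (T l) / (x * y / (l * x + (1 - l) * y)) ^ 2) = _
    generalize l * x + (1 - l) * y = D at d0 ⊢
    field_simp
  have hint0 : IntegrableOn
      (fun l => |x * y * (y - x) / (l * x + (1 - l) * y) ^ 2| • (f (T l) / (T l) ^ 2))
      (Ioo (0:ℝ) 1) :=
    (integrableOn_image_iff_integrableOn_abs_deriv_smul measurableSet_Ioo hderiv hinj
      (fun t => f t / t ^ 2)).mp (by rw [himage]; exact hf)
  have hint1 : IntegrableOn (fun l => (y - x) / (x * y) * f (T l)) (Ioo (0:ℝ) 1) :=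
    hint0.congr_fun hEq measurableSet_Ioo
  have hint2 : IntegrableOn (fun l => f (T l)) (Ioo (0:ℝ) 1) := by
    have h2 : IntegrableOn (fun l => ((y - x) / (x * y))⁻¹ * ((y - x) / (x * y) * f (T l)))
        (Ioo (0:ℝ) 1) := hint1.const_mul _
    refine h2.congr_fun ?_ measurableSet_Ioo
    intro l _
    field_simp [sub_ne_zero.mpr hxy.ne']
  refine ⟨?_, hint2⟩
  have hcov := integral_image_eq_integral_abs_deriv_smul measurableSet_Ioo hderiv hinj
      (fun t => f t / t ^ 2)
  rw [himage] at hcov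
  rw [integral_of_le hxy.le, integral_Ioc_eq_integral_Ioo, hcov,
    setIntegral_congr_fun measurableSet_Ioo hEq, MeasureTheory.integral_const_mul]

section G
variable {a b : ℝ} (ha : 0 < a) (hab : a < b)
include ha hab

lemma hD {t : ℝ} (ht : a ≤ t) : 0 < (a + b) * t - a * b := by nlinarith

lemma Gmem {t : ℝ} (ht : t ∈ Icc a b) : a * b * t / ((a + b) * t - a * b) ∈ Icc a b := by
  have hd := hD ha hab ht.1
  constructor
  · rw [le_div_iff₀ hd]
    nlinarith [mul_nonneg (mul_pos ha ha).le (sub_nonneg.mpr ht.2)]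
  · rw [div_le_iff₀ hd]
    nlinarith [mul_nonneg (mul_pos (ha.trans hab) (ha.trans hab)).le (sub_nonneg.mpr ht.1)]

lemma Ganti {s t : ℝ} (hs : a ≤ s) (hst : s < t) :
    a * b * t / ((a + b) * t - a * b) < a * b * s / ((a + b) * s - a * b) := by
  have hds := hD ha hab hs
  have hdt := hD ha hab (by linarith : a ≤ t)
  rw [div_lt_div_iff₀ hdt hds]
  nlinarith [mul_pos (mul_pos ha (lt_trans ha hab)) (sub_pos.mpr hst)]

lemma Ginv {t : ℝ} (ht : a ≤ t) :
    a * b * (a * b * t / ((a + b) * t - a * b)) /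
      ((a + b) * (a * b * t / ((a + b) * t - a * b)) - a * b) = t := by
  have hb : 0 < b := ha.trans hab
  have hd := (hD ha hab ht).ne'
  have h1 : (a + b) * (a * b * t / ((a + b) * t - a * b)) - a * b
      = a * b * (a * b) / ((a + b) * t - a * b) := by
    field_simp
    ring
  rw [h1, mul_div_assoc', div_div_div_cancel_right₀ hd]
  field_simp

end G

section G2
variable {a b : ℝ} (ha : 0 < a) (hab : a < b)
include ha hab

lemma cov_G {x y : ℝ} (hx : x ∈ Icc a b) (hy : y ∈ Icc a b) (hxy : x < y) (f : ℝ → ℝ)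
    (hf : IntegrableOn (fun t => f t / t ^ 2)
      (Ioo (a * b * y / ((a + b) * y - a * b)) (a * b * x / ((a + b) * x - a * b)))) :
    ((∫ t in (a * b * y / ((a + b) * y - a * b))..(a * b * x / ((a + b) * x - a * b)),
        f t / t ^ 2) = ∫ t in x..y, f (a * b * t / ((a + b) * t - a * b)) / t ^ 2) ∧
      IntegrableOn (fun t => f (a * b * t / ((a + b) * t - a * b)) / t ^ 2) (Ioo x y) := by
  have hb : 0 < b := ha.trans hab
  set G : ℝ → ℝ := fun t => a * b * t / ((a + b) * t - a * b) with hG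
  have hGyx : G y < G x := Ganti ha hab hx.1 hxy
  have hderiv : ∀ t ∈ Ioo x y,
      HasDerivWithinAt G (-(a * b * (a * b)) / ((a + b) * t - a * b) ^ 2) (Ioo x y) t := by
    intro t ht
    have hat : a ≤ t := hx.1.trans ht.1.le
    have hd0 := (hD ha hab hat).ne'
    have hnum : HasDerivAt (fun t : ℝ => a * b * t) (a * b) t := by
      simpa using (hasDerivAt_id t).const_mul (a * b)
    have hden : HasDerivAt (fun t : ℝ => (a + b) * t - a * b) (a + b) t := by
      simpa using ((hasDerivAt_id t).const_mul (a + b)).sub_const (a * b)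
    have := hnum.div hden hd0
    refine HasDerivAt.hasDerivWithinAt ?_
    exact this.congr_deriv (by ring)
  have hanti : StrictAntiOn G (Ioo x y) := fun s hs t ht hst =>
    Ganti ha hab (hx.1.trans hs.1.le) hst
  have hinj : InjOn G (Ioo x y) := hanti.injOn
  have himage : G '' Ioo x y = Ioo (G y) (G x) := by
    apply Subset.antisymm
    · rintro _ ⟨t, ht, rfl⟩
      exact ⟨Ganti ha hab (hx.1.trans ht.1.le) ht.2, Ganti ha hab hx.1 ht.1⟩
    · rintro z ⟨hz1, hz2⟩
      have hGy : G y ∈ Icc a b := Gmem ha hab hy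
      have hGx : G x ∈ Icc a b := Gmem ha hab hx
      have haz : a ≤ z := hGy.1.trans hz1.le
      refine ⟨G z, ⟨?_, ?_⟩, Ginv ha hab haz⟩
      · have h2 := Ganti ha hab haz hz2
        rwa [show a * b * G x / ((a + b) * G x - a * b) = x from Ginv ha hab hx.1] at h2
      · have h2 := Ganti ha hab hGy.1 hz1
        rwa [show a * b * G y / ((a + b) * G y - a * b) = y from Ginv ha hab hy.1] at h2
  have hEq : EqOn (fun t => |(-(a * b * (a * b)) / ((a + b) * t - a * b) ^ 2)| • (f (G t) / (G t) ^ 2))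
      (fun t => f (G t) / t ^ 2) (Ioo x y) := by
    intro t ht
    have hat : a ≤ t := hx.1.trans ht.1.le
    have ht0 : (0:ℝ) < t := lt_of_lt_of_le ha hat
    have hd0 := (hD ha hab hat).ne'
    have habs : |(-(a * b * (a * b)) / ((a + b) * t - a * b) ^ 2)| =
        a * b * (a * b) / ((a + b) * t - a * b) ^ 2 := by
      rw [abs_div, abs_neg, abs_of_pos (by positivity), abs_of_nonneg (sq_nonneg _)]
    simp only [smul_eq_mul, habs]
    show _ * (f (G t) / (a * b * t / ((a + b) * t - a * b)) ^ 2) = _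
    field_simp
  have hint0 : IntegrableOn
      (fun t => |(-(a * b * (a * b)) / ((a + b) * t - a * b) ^ 2)| • (f (G t) / (G t) ^ 2))
      (Ioo x y) :=
    (integrableOn_image_iff_integrableOn_abs_deriv_smul measurableSet_Ioo hderiv hinj
      (fun t => f t / t ^ 2)).mp (by rw [himage]; exact hf)
  refine ⟨?_, hint0.congr_fun hEq measurableSet_Ioo⟩
  have hcov := integral_image_eq_integral_abs_deriv_smul measurableSet_Ioo hderiv hinj
      (fun t => f t / t ^ 2)
  rw [himage] at hcov
  rw [integral_of_le hGyx.le, integral_Ioc_eq_integral_Ioo, hcov,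
    setIntegral_congr_fun measurableSet_Ioo hEq, integral_of_le hxy.le,
    integral_Ioc_eq_integral_Ioo]

end G2

end Helpers

open MeasureTheory Set intervalIntegral

set_option maxHeartbeats 1600000 in
/-- Hermite–Hadamard type inequalities on subintervals for symmetrized
harmonically h-convex functions. -/
theorem hermite_hadamard_h_convex_subinterval (a b : ℝ) (f h : ℝ → ℝ)
    (ha : 0 < a) (hab : a < b)
    (hh0 : ∀ t ∈ Set.Ioo (0:ℝ) 1, 0 ≤ h t)
    (hhalf : 0 < h (1/2))
    (hhint : IntervalIntegrable h MeasureTheory.volume 0 1)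
    (hf0 : ∀ x ∈ Set.Icc a b, 0 ≤ f x)
    (hfint : IntervalIntegrable f MeasureTheory.volume a b)
    (hshc : ∀ x ∈ Set.Icc a b, ∀ y ∈ Set.Icc a b, ∀ l ∈ Set.Ioo (0:ℝ) 1,
      symTransform a b f (x * y / (l * x + (1 - l) * y)) ≤
        h l * symTransform a b f y + h (1 - l) * symTransform a b f x) :
    ∀ x ∈ Set.Icc a b, ∀ y ∈ Set.Icc a b, x ≠ y →
      1 / (4 * h (1/2)) * (f (2 * x * y / (x + y)) +
          f (2 * a * b * x * y / (2 * x * y * (a + b) - a * b * (x + y)))) ≤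
        x * y / (2 * (y - x)) *
          ((∫ t in x..y, f t / t ^ 2) +
            ∫ t in (a * b * y / ((a + b) * y - a * b))..(a * b * x / ((a + b) * x - a * b)),
              f t / t ^ 2) ∧
      x * y / (2 * (y - x)) *
          ((∫ t in x..y, f t / t ^ 2) +
            ∫ t in (a * b * y / ((a + b) * y - a * b))..(a * b * x / ((a + b) * x - a * b)),
              f t / t ^ 2) ≤
        (1/2) * (f x + f (a * b * x / ((a + b) * x - a * b)) + f y +
          f (a * b * y / ((a + b) * y - a * b))) * ∫ t in (0:ℝ)..1, h t := by
  have hb : 0 < b := ha.trans hab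
  have hfIcc : IntegrableOn f (Icc a b) := by
    rw [integrableOn_Icc_iff_integrableOn_Ioc]
    exact (intervalIntegrable_iff_integrableOn_Ioc_of_le hab.le).mp hfint
  have hquad : ∀ u ∈ Icc a b, ∀ v ∈ Icc a b, IntegrableOn (fun t => f t / t ^ 2) (Ioo u v) := by
    intro u hu v hv
    have hsub : Icc u v ⊆ Icc a b := Icc_subset_Icc hu.1 hv.2
    have hcont : ContinuousOn (fun t : ℝ => (t ^ 2)⁻¹) (Icc u v) := by
      refine ContinuousOn.inv₀ (continuous_pow 2).continuousOn ?_
      intro t ht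
      have h0 : 0 < t := lt_of_lt_of_le ha (hsub ht).1
      positivity
    have hmul : IntegrableOn (fun t => f t * (t ^ 2)⁻¹) (Icc u v) :=
      (hfIcc.mono_set hsub).mul_continuousOn hcont isCompact_Icc
    have h2 := hmul.mono_set Ioo_subset_Icc_self
    simpa [div_eq_mul_inv] using h2
  have hhIoo : IntegrableOn h (Ioo (0:ℝ) 1) :=
    (intervalIntegrable_iff_integrableOn_Ioo_of_le zero_le_one).mp hhint
  have key : ∀ x ∈ Set.Icc a b, ∀ y ∈ Set.Icc a b, x < y →
      (1 / (4 * h (1/2)) * (f (2 * x * y / (x + y)) +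
          f (2 * a * b * x * y / (2 * x * y * (a + b) - a * b * (x + y)))) ≤
        x * y / (2 * (y - x)) *
          ((∫ t in x..y, f t / t ^ 2) +
            ∫ t in (a * b * y / ((a + b) * y - a * b))..(a * b * x / ((a + b) * x - a * b)),
              f t / t ^ 2) ∧
      x * y / (2 * (y - x)) *
          ((∫ t in x..y, f t / t ^ 2) +
            ∫ t in (a * b * y / ((a + b) * y - a * b))..(a * b * x / ((a + b) * x - a * b)),
              f t / t ^ 2) ≤
        (1/2) * (f x + f (a * b * x / ((a + b) * x - a * b)) + f y +
          f (a * b * y / ((a + b) * y - a * b))) * ∫ t in (0:ℝ)..1, h t) := by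
    intro x hx y hy hxy
    have hx0 : 0 < x := lt_of_lt_of_le ha hx.1
    have hy0 : 0 < y := lt_of_lt_of_le ha hy.1
    have hyx : y - x ≠ 0 := sub_ne_zero.mpr hxy.ne'
    obtain ⟨covG, hfG⟩ := cov_G ha hab hx hy hxy f
      (hquad _ (Gmem ha hab hy) _ (Gmem ha hab hx))
    obtain ⟨cov1, hint1⟩ := cov_T hx0 hxy f (hquad x hx y hy)
    have hfG' : IntegrableOn
        (fun t => (fun s => f (a * b * s / ((a + b) * s - a * b))) t / t ^ 2) (Ioo x y) := hfG
    obtain ⟨cov2, hint2⟩ := cov_T hx0 hxy (fun s => f (a * b * s / ((a + b) * s - a * b))) hfG'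
    have cov2' : (∫ t in x..y, f (a * b * t / ((a + b) * t - a * b)) / t ^ 2) =
        (y - x) / (x * y) * ∫ l in Ioo (0:ℝ) 1,
          f (a * b * (x * y / (l * x + (1 - l) * y)) /
            ((a + b) * (x * y / (l * x + (1 - l) * y)) - a * b)) := cov2
    have hint2' : IntegrableOn (fun l =>
        f (a * b * (x * y / (l * x + (1 - l) * y)) /
          ((a + b) * (x * y / (l * x + (1 - l) * y)) - a * b))) (Ioo (0:ℝ) 1) := hint2
    set ST : ℝ → ℝ := fun l => symTransform a b f (x * y / (l * x + (1 - l) * y)) with hSTdef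
    have hSTint : IntegrableOn ST (Ioo (0:ℝ) 1) := by
      have h2 : IntegrableOn (fun l => (1/2 : ℝ) *
          (f (x * y / (l * x + (1 - l) * y)) +
            f (a * b * (x * y / (l * x + (1 - l) * y)) /
              ((a + b) * (x * y / (l * x + (1 - l) * y)) - a * b)))) (Ioo (0:ℝ) 1) :=
        (hint1.add hint2').const_mul _
      exact h2
    have hM : x * y / (2 * (y - x)) *
        ((∫ t in x..y, f t / t ^ 2) +
          ∫ t in (a * b * y / ((a + b) * y - a * b))..(a * b * x / ((a + b) * x - a * b)),
            f t / t ^ 2) = ∫ l in Ioo (0:ℝ) 1, ST l := by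
      rw [covG, cov1, cov2']
      have hsplit : (∫ l in Ioo (0:ℝ) 1, ST l) = (1/2 : ℝ) *
          ((∫ l in Ioo (0:ℝ) 1, f (x * y / (l * x + (1 - l) * y))) +
            ∫ l in Ioo (0:ℝ) 1, f (a * b * (x * y / (l * x + (1 - l) * y)) /
              ((a + b) * (x * y / (l * x + (1 - l) * y)) - a * b))) := by
        rw [← MeasureTheory.integral_add hint1 hint2']
        rw [← MeasureTheory.integral_const_mul]
        rfl
      rw [hsplit]
      field_simp
    constructor
    · -- left inequality
      have hmemT : ∀ l ∈ Ioo (0:ℝ) 1, x * y / (l * x + (1 - l) * y) ∈ Icc a b := by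
        intro l hl
        have h2 := Tmem hx0 hxy hl
        exact ⟨hx.1.trans h2.1.le, h2.2.le.trans hy.2⟩
      have hxy2 : (0:ℝ) < x + y := by positivity
      have hmmem : 2 * x * y / (x + y) ∈ Icc a b := by
        constructor
        · have h2 : x ≤ 2 * x * y / (x + y) := by
            rw [le_div_iff₀ hxy2]; nlinarith
          linarith [hx.1]
        · have h2 : 2 * x * y / (x + y) ≤ y := by
            rw [div_le_iff₀ hxy2]; nlinarith
          linarith [hy.2]
      have ptL : ∀ l ∈ Ioo (0:ℝ) 1, symTransform a b f (2 * x * y / (x + y)) ≤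
          h (1/2) * ST (1 - l) + h (1/2) * ST l := by
        intro l hl
        have hl' : 1 - l ∈ Ioo (0:ℝ) 1 := ⟨by linarith [hl.2], by linarith [hl.1]⟩
        have h1 := hshc _ (hmemT l hl) _ (hmemT _ hl') (1/2) (by norm_num)
        rw [show (1:ℝ) - 1/2 = 1/2 by norm_num] at h1
        rw [show (1:ℝ) - (1 - l) = l from by ring] at h1
        have d1 : 0 < l * x + (1 - l) * y := by nlinarith [hl.1, hl.2]
        have d2 : 0 < (1 - l) * x + l * y := by nlinarith [hl.1, hl.2]
        have harg : (x * y / (l * x + (1 - l) * y)) * (x * y / ((1 - l) * x + l * y)) /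
            (1/2 * (x * y / (l * x + (1 - l) * y)) + 1/2 * (x * y / ((1 - l) * x + l * y)))
            = 2 * x * y / (x + y) := by
          have hp1 := div_pos (mul_pos hx0 hy0) d1
          have hp2 := div_pos (mul_pos hx0 hy0) d2
          have hpos : 0 < 1/2 * (x * y / (l * x + (1 - l) * y)) +
              1/2 * (x * y / ((1 - l) * x + l * y)) := by linarith
          have hs : x + y = (l * x + (1 - l) * y) + ((1 - l) * x + l * y) := by ring
          rw [hs]
          generalize l * x + (1 - l) * y = D1 at d1 ⊢
          generalize (1 - l) * x + l * y = D2 at d2 ⊢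
          have hD12 := add_pos d1 d2
          field_simp
          ring
        rw [harg] at h1
        simp only [hSTdef]
        rw [show (1:ℝ) - (1 - l) = l from by ring]
        exact h1
      have hSTrefl := reflIoo ST hSTint
      have hconst : (∫ _ in Ioo (0:ℝ) 1, symTransform a b f (2 * x * y / (x + y))) =
          symTransform a b f (2 * x * y / (x + y)) := by
        simp [Real.volume_Ioo]
      have hIntL : IntegrableOn (fun l => h (1/2) * ST (1 - l) + h (1/2) * ST l)
          (Ioo (0:ℝ) 1) := (hSTrefl.1.const_mul _).add (hSTint.const_mul _)
      have step := setIntegral_mono_on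
        (integrableOn_const (by simp [Real.volume_Ioo])) hIntL
        measurableSet_Ioo ptL
      rw [hconst] at step
      have hL : (∫ l in Ioo (0:ℝ) 1, (h (1/2) * ST (1 - l) + h (1/2) * ST l)) =
          2 * h (1/2) * ∫ l in Ioo (0:ℝ) 1, ST l := by
        rw [MeasureTheory.integral_add (hSTrefl.1.const_mul _) (hSTint.const_mul _),
          MeasureTheory.integral_const_mul, MeasureTheory.integral_const_mul, hSTrefl.2]
        ring
      rw [hL] at step
      have hden : 0 < (a + b) * (2 * x * y / (x + y)) - a * b := hD ha hab hmmem.1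
      have hm' : 2 * a * b * x * y / (2 * x * y * (a + b) - a * b * (x + y)) =
          a * b * (2 * x * y / (x + y)) / ((a + b) * (2 * x * y / (x + y)) - a * b) := by
        have hEeq : 2 * x * y * (a + b) - a * b * (x + y) =
            (x + y) * ((a + b) * (2 * x * y / (x + y)) - a * b) := by
          field_simp
        have hE : 0 < 2 * x * y * (a + b) - a * b * (x + y) := by
          rw [hEeq]; exact mul_pos hxy2 hden
        rw [div_eq_div_iff hE.ne' hden.ne']
        field_simp
      rw [hM, hm']
      have hfm : f (2 * x * y / (x + y)) +
          f (a * b * (2 * x * y / (x + y)) / ((a + b) * (2 * x * y / (x + y)) - a * b)) =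
          2 * symTransform a b f (2 * x * y / (x + y)) := by
        simp only [symTransform]; ring
      rw [hfm]
      have h4 : (0:ℝ) < 4 * h (1/2) := by linarith
      rw [div_mul_eq_mul_div, div_le_iff₀ h4]
      nlinarith [step]
    · -- right inequality
      rw [hM]
      have pt : ∀ l ∈ Ioo (0:ℝ) 1, ST l ≤
          h l * symTransform a b f y + h (1 - l) * symTransform a b f x := by
        intro l hl
        exact hshc x hx y hy l hl
      have hIntR : IntegrableOn (fun l =>
          h l * symTransform a b f y + h (1 - l) * symTransform a b f x) (Ioo (0:ℝ) 1) :=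
        (hhIoo.mul_const _).add ((reflIoo h hhIoo).1.mul_const _)
      have step := setIntegral_mono_on hSTint hIntR measurableSet_Ioo pt
      have hRint : (∫ l in Ioo (0:ℝ) 1,
          (h l * symTransform a b f y + h (1 - l) * symTransform a b f x)) =
          (symTransform a b f x + symTransform a b f y) * ∫ l in Ioo (0:ℝ) 1, h l := by
        rw [MeasureTheory.integral_add (hhIoo.mul_const _) ((reflIoo h hhIoo).1.mul_const _),
          MeasureTheory.integral_mul_const, MeasureTheory.integral_mul_const,
          (reflIoo h hhIoo).2]
        ring
      have hfin : (1/2 : ℝ) * (f x + f (a * b * x / ((a + b) * x - a * b)) + f y +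
          f (a * b * y / ((a + b) * y - a * b))) * (∫ t in (0:ℝ)..1, h t) =
          (symTransform a b f x + symTransform a b f y) * ∫ l in Ioo (0:ℝ) 1, h l := by
        rw [iooInt]
        simp only [symTransform]
        ring
      rw [hfin, ← hRint]
      exact step
  intro x hx y hy hne
  rcases lt_or_gt_of_ne hne with hlt | hgt
  · exact key x hx y hy hlt
  · obtain ⟨k1, k2⟩ := key y hy x hx hgt
    have hxy0 : x - y ≠ 0 := sub_ne_zero.mpr (ne_of_gt hgt)
    have hyx0 : y - x ≠ 0 := sub_ne_zero.mpr (ne_of_lt hgt)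
    have e3 : x * y / (2 * (y - x)) *
          ((∫ t in x..y, f t / t ^ 2) +
            ∫ t in (a * b * y / ((a + b) * y - a * b))..(a * b * x / ((a + b) * x - a * b)),
              f t / t ^ 2) =
        y * x / (2 * (x - y)) *
          ((∫ t in y..x, f t / t ^ 2) +
            ∫ t in (a * b * x / ((a + b) * x - a * b))..(a * b * y / ((a + b) * y - a * b)),
              f t / t ^ 2) := by
      rw [integral_symm y x, integral_symm (a * b * x / ((a + b) * x - a * b))
        (a * b * y / ((a + b) * y - a * b))]
      field_simp [hxy0, hyx0]
      ring
    constructor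
    · have e1 : 2 * x * y / (x + y) = 2 * y * x / (y + x) := by ring
      have e2 : 2 * a * b * x * y / (2 * x * y * (a + b) - a * b * (x + y)) =
          2 * a * b * y * x / (2 * y * x * (a + b) - a * b * (y + x)) := by ring
      rw [e1, e2, e3]
      exact k1
    · rw [e3]
      have e4 : (1/2 : ℝ) * (f x + f (a * b * x / ((a + b) * x - a * b)) + f y +
            f (a * b * y / ((a + b) * y - a * b))) =
          (1/2 : ℝ) * (f y + f (a * b * y / ((a + b) * y - a * b)) + f x +
            f (a * b * x / ((a + b) * x - a * b))) := by ring
      rw [e4]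
      exact k2
end
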